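/- arXiv:1912.05599 — 6 statements merged into one kernel-verified Lean document; each statement's English description precedes it below -/
import Mathlib

section
/- The maximum value μ := sup_{x≥0} f(x) of the function f(x) := x − x²·M(x) satisfies 0.346813047097384 ≤ μ ≤ 0.346813047097549. -/
open Real MeasureTheory Finset

/-- Density of the standard normal distribution. -/
noncomputable def stdPdf (x : ℝ) : ℝ := Real.exp (-x ^ 2 / 2) / Real.sqrt (2 * Real.pi)

/-- Cumulative distribution function of the standard normal distribution. -/
noncomputable def stdCdf (x : ℝ) : ℝ := ∫ t in Set.Iic x, stdPdf t

/-- The Mills ratio. -/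
noncomputable def mills (x : ℝ) : ℝ := (1 - stdCdf x) / stdPdf x

/-- The function `f(x) = x - x² M(x)`. -/
noncomputable def fMills (x : ℝ) : ℝ := x - x ^ 2 * mills x

/-- `μ`, the supremum of `f` over `[0, ∞)`. -/
noncomputable def muMills : ℝ := sSup (fMills '' Set.Ici 0)

/-- The probability simplex. -/
def probSimplex (n : ℕ) : Set (Fin n → ℝ) :=
  {p | (∀ i, 0 ≤ p i) ∧ ∑ i, p i = 1}

/-- The positive probability simplex. -/
def probSimplexPos (n : ℕ) : Set (Fin n → ℝ) :=
  {p | (∀ i, 0 < p i) ∧ ∑ i, p i = 1}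

/-- Expected number of connected components of Ross's random graph. -/
noncomputable def EC {n : ℕ} (p : Fin n → ℝ) : ℝ :=
  ∑ S ∈ (Finset.univ : Finset (Fin n)).powerset.filter (fun S => S.Nonempty),
    (S.card - 1).factorial * ∏ j ∈ S, p j

/-- The total variation distance. -/
noncomputable def TV {n : ℕ} (p q : Fin n → ℝ) : ℝ := (∑ i, |p i - q i|) / 2

/-- The decreasing rearrangement of a vector. -/
noncomputable def decRearrange {n : ℕ} (x : Fin n → ℝ) : Fin n → ℝ :=
  fun j => x (Tuple.sort x j.rev)

/-- `Majorizes x y` means `x ≻ y`. -/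
def Majorizes {n : ℕ} (x y : Fin n → ℝ) : Prop :=
  (∀ k : ℕ, ∑ j ∈ Finset.univ.filter (fun j : Fin n => (j : ℕ) < k), decRearrange y j
      ≤ ∑ j ∈ Finset.univ.filter (fun j : Fin n => (j : ℕ) < k), decRearrange x j)
  ∧ ∑ j, x j = ∑ j, y j

/-- The coefficients `c_{k,m}`. -/
noncomputable def ckm (m k : ℕ) : ℝ := (m.choose k) * (k + 1).factorial / (m : ℝ) ^ k

/-- The sum `S_m(s)`. -/
noncomputable def Sm (m : ℕ) (s : ℝ) : ℝ := ∑ k ∈ Finset.Icc 1 m, ckm m k * (1 - s) ^ (k - 1)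

/-- The quantity `B_m(s)`. -/
noncomputable def Bm (m : ℕ) (s : ℝ) : ℝ := s * ∑ k ∈ Finset.Icc 1 m, ckm m k * (1 - s) ^ k

/-! Auxiliary development -/

noncomputable def gss (t : ℝ) : ℝ := Real.exp (-t ^ 2 / 2)

lemma gss_pos (t : ℝ) : 0 < gss t := Real.exp_pos _
lemma gss_cont : Continuous gss := by
  unfold gss; continuity

lemma gss_eq (t : ℝ) : gss t = Real.exp (-(1/2) * t ^ 2) := by
  unfold gss; ring_nf

lemma integrable_gss : Integrable gss := by
  have h := integrable_exp_neg_mul_sq (b := (1/2 : ℝ)) (by norm_num)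
  refine h.congr ?_
  filter_upwards with t using (gss_eq t).symm

lemma integral_gss : ∫ t, gss t = Real.sqrt (2 * Real.pi) := by
  have h := integral_gaussian (1/2 : ℝ)
  rw [show Real.pi / (1/2 : ℝ) = 2 * Real.pi by ring] at h
  rw [← h]
  exact integral_congr_ae (Filter.Eventually.of_forall fun t => gss_eq t)

lemma sqrt_pi_two : Real.sqrt (2 * Real.pi) = 2 * Real.sqrt (Real.pi / 2) := by
  rw [show 2 * Real.pi = 4 * (Real.pi / 2) by ring, show (4:ℝ) = 2^2 by norm_num,
    Real.sqrt_mul (by positivity), Real.sqrt_sq (by norm_num)]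

lemma integral_gss_Ioi_zero : ∫ t in Set.Ioi (0:ℝ), gss t = Real.sqrt (Real.pi / 2) := by
  have h := integral_gaussian_Ioi (1/2 : ℝ)
  rw [show Real.pi / (1/2 : ℝ) = 2 * Real.pi by ring] at h
  have h2 : ∫ t in Set.Ioi (0:ℝ), gss t = Real.sqrt (2*Real.pi) / 2 := by
    rw [← h]
    exact setIntegral_congr_ae measurableSet_Ioi
      (Filter.Eventually.of_forall fun t _ => gss_eq t)
  rw [h2, sqrt_pi_two]; ring

noncomputable def TT (x : ℝ) : ℝ := ∫ t in Set.Ioi x, gss t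
noncomputable def W (x : ℝ) : ℝ := ∫ t in (0:ℝ)..x, gss t

lemma TT_add (x : ℝ) : (∫ t in Set.Iic x, gss t) + TT x = Real.sqrt (2 * Real.pi) := by
  rw [← integral_gss]
  exact intervalIntegral.integral_Iic_add_Ioi integrable_gss.integrableOn integrable_gss.integrableOn

lemma TT_eq (x : ℝ) : TT x = Real.sqrt (Real.pi / 2) - W x := by
  have hx := TT_add x
  have h0 := TT_add 0
  have hW : W x = (∫ t in Set.Iic x, gss t) - ∫ t in Set.Iic (0:ℝ), gss t := by
    rw [eq_comm]
    exact intervalIntegral.integral_Iic_sub_Iic integrable_gss.integrableOn integrable_gss.integrableOn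
  have hT0 : TT 0 = Real.sqrt (Real.pi / 2) := integral_gss_Ioi_zero
  have := sqrt_pi_two
  linarith

lemma TT_nonneg (x : ℝ) : 0 ≤ TT x :=
  setIntegral_nonneg measurableSet_Ioi fun t _ => (gss_pos t).le

lemma hasDerivAt_W (x : ℝ) : HasDerivAt W (gss x) x :=
  (gss_cont.integral_hasStrictDerivAt 0 x).hasDerivAt

lemma hasDerivAt_TT (x : ℝ) : HasDerivAt TT (-gss x) x := by
  have : TT = fun y => Real.sqrt (Real.pi / 2) - W y := funext TT_eq
  rw [this]
  simpa using (hasDerivAt_W x).const_sub (Real.sqrt (Real.pi / 2))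

lemma stdPdf_eq (x : ℝ) : stdPdf x = gss x / Real.sqrt (2 * Real.pi) := rfl
lemma sqrt2pi_pos : 0 < Real.sqrt (2 * Real.pi) := Real.sqrt_pos.2 (by positivity)
lemma stdPdf_pos (x : ℝ) : 0 < stdPdf x := div_pos (gss_pos x) sqrt2pi_pos

lemma mills_eq (x : ℝ) : mills x = TT x * Real.exp (x ^ 2 / 2) := by
  have h1 : stdCdf x = (∫ t in Set.Iic x, gss t) / Real.sqrt (2 * Real.pi) := by
    unfold stdCdf
    rw [eq_comm, div_eq_iff sqrt2pi_pos.ne', ← integral_mul_const]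
    refine setIntegral_congr_ae measurableSet_Iic (Filter.Eventually.of_forall fun t _ => ?_)
    rw [stdPdf_eq, div_mul_cancel₀ _ sqrt2pi_pos.ne']
  have h2 : 1 - stdCdf x = TT x / Real.sqrt (2 * Real.pi) := by
    rw [h1, eq_div_iff sqrt2pi_pos.ne', sub_mul, one_mul, div_mul_cancel₀ _ sqrt2pi_pos.ne']
    have := TT_add x
    linarith
  unfold mills
  rw [h2, stdPdf_eq]
  have hg := (gss_pos x).ne'
  have hs := sqrt2pi_pos.ne'
  have hgs : gss x = Real.exp (-x^2/2) := rfl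
  field_simp
  rw [hgs, mul_assoc, ← Real.exp_add]
  rw [show -x ^ 2 / 2 + x ^ 2 / 2 = 0 by ring, Real.exp_zero, mul_one]
/-! Derivatives -/

noncomputable def FP (x : ℝ) : ℝ := 1 + x ^ 2 - (2 * x + x ^ 3) * mills x

lemma hasDerivAt_exp_half (x : ℝ) : HasDerivAt (fun y : ℝ => Real.exp (y ^ 2 / 2)) (x * Real.exp (x ^ 2 / 2)) x := by
  have h1 : HasDerivAt (fun y : ℝ => y ^ 2 / 2) x x := by
    simpa using (hasDerivAt_pow 2 x).div_const 2
  convert h1.exp using 1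
  ring

lemma gss_mul_exp (x : ℝ) : gss x * Real.exp (x ^ 2 / 2) = 1 := by
  show Real.exp (-x^2/2) * _ = 1
  rw [← Real.exp_add, show -x ^ 2 / 2 + x ^ 2 / 2 = 0 by ring, Real.exp_zero]

lemma hasDerivAt_mills (x : ℝ) : HasDerivAt mills (x * mills x - 1) x := by
  have h : HasDerivAt (fun y => TT y * Real.exp (y ^ 2 / 2))
      (-gss x * Real.exp (x ^ 2 / 2) + TT x * (x * Real.exp (x ^ 2 / 2))) x :=
    (hasDerivAt_TT x).mul (hasDerivAt_exp_half x)
  have e : mills = fun y => TT y * Real.exp (y ^ 2 / 2) := funext mills_eq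
  rw [e]
  convert h using 1
  simp only
  linear_combination gss_mul_exp x

lemma hasDerivAt_fMills (x : ℝ) : HasDerivAt fMills (FP x) x := by
  have h : HasDerivAt (fun y => y - y ^ 2 * mills y)
      (1 - ((2 * x ^ 1) * mills x + x ^ 2 * (x * mills x - 1))) x :=
    (hasDerivAt_id x).sub (((hasDerivAt_pow 2 x)).mul (hasDerivAt_mills x))
  have e : fMills = fun y => y - y ^ 2 * mills y := funext fun y => rfl
  rw [e]
  convert h using 1
  unfold FP; ring

lemma hasDerivAt_FP (x : ℝ) : HasDerivAt FP (4 * x + x ^ 3 - (2 + 5 * x ^ 2 + x ^ 4) * mills x) x := by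
  have h1 : HasDerivAt (fun y : ℝ => 1 + y ^ 2) (2 * x) x := by
    simpa using (hasDerivAt_const x (1:ℝ)).fun_add (hasDerivAt_pow 2 x)
  have h2 : HasDerivAt (fun y : ℝ => (2 * y + y ^ 3) * mills y)
      ((2 + 3 * x ^ 2) * mills x + (2 * x + x ^ 3) * (x * mills x - 1)) x := by
    have ha : HasDerivAt (fun y : ℝ => 2 * y + y ^ 3) (2 + 3 * x ^ 2) x := by
      have := ((hasDerivAt_id x).const_mul (2:ℝ)).fun_add (hasDerivAt_pow 3 x)
      simpa using this
    exact ha.mul (hasDerivAt_mills x)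
  have h := h1.fun_sub h2
  have e : FP = fun y => (1 + y ^ 2) - (2 * y + y ^ 3) * mills y := funext fun y => rfl
  rw [e]
  convert h using 1
  · rfl
  · rfl
  ring

/-! Continued fraction lower bound: mills x ≥ N8/D8 -/

noncomputable def N8 (x : ℝ) : ℝ := 279 * x + 185 * x ^ 3 + 27 * x ^ 5 + x ^ 7
noncomputable def D8 (x : ℝ) : ℝ := 105 + 420 * x ^ 2 + 210 * x ^ 4 + 28 * x ^ 6 + x ^ 8

lemma D8_pos (x : ℝ) : 0 < D8 x := by unfold D8; positivity

lemma hasDerivAt_gss (x : ℝ) : HasDerivAt gss (-x * gss x) x := by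
  have h1 : HasDerivAt (fun y : ℝ => -y ^ 2 / 2) (-x) x := by
    have := ((hasDerivAt_pow 2 x).fun_neg).div_const 2
    convert this using 1
    · rfl
    · rfl
    ring
  have h2 := h1.exp
  have e : gss = fun y : ℝ => Real.exp (-y ^ 2 / 2) := rfl
  rw [e]
  convert h2 using 1
  ring

noncomputable def G8 (x : ℝ) : ℝ := TT x - N8 x / D8 x * gss x

lemma hasDerivAt_G8 (x : ℝ) : HasDerivAt G8 (-(40320 / (D8 x) ^ 2) * gss x) x := by
  have hN : HasDerivAt N8 (279 + 555 * x ^ 2 + 135 * x ^ 4 + 7 * x ^ 6) x := by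
    unfold N8
    have h := (((hasDerivAt_id x).const_mul (279:ℝ)).fun_add
      ((hasDerivAt_pow 3 x).const_mul (185:ℝ))).fun_add
      (((hasDerivAt_pow 5 x).const_mul (27:ℝ)).fun_add (hasDerivAt_pow 7 x))
    convert h using 1
    · rfl
    · rfl
    · funext y; simp only [id]; ring
    · push_cast [id]; ring
  have hD : HasDerivAt D8 (840 * x + 840 * x ^ 3 + 168 * x ^ 5 + 8 * x ^ 7) x := by
    unfold D8
    have h := ((hasDerivAt_const x (105:ℝ)).fun_add
      ((hasDerivAt_pow 2 x).const_mul (420:ℝ))).fun_add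
      ((((hasDerivAt_pow 4 x).const_mul (210:ℝ)).fun_add
        ((hasDerivAt_pow 6 x).const_mul (28:ℝ))).fun_add (hasDerivAt_pow 8 x))
    convert h using 1
    · rfl
    · rfl
    · funext y; ring
    · ring
  have hq : HasDerivAt (fun y => N8 y / D8 y)
      (((279 + 555 * x ^ 2 + 135 * x ^ 4 + 7 * x ^ 6) * D8 x
        - N8 x * (840 * x + 840 * x ^ 3 + 168 * x ^ 5 + 8 * x ^ 7)) / (D8 x) ^ 2) x :=
    hN.div hD (D8_pos x).ne'
  have h : HasDerivAt G8 (-gss x - ((((279 + 555 * x ^ 2 + 135 * x ^ 4 + 7 * x ^ 6) * D8 x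
        - N8 x * (840 * x + 840 * x ^ 3 + 168 * x ^ 5 + 8 * x ^ 7)) / (D8 x) ^ 2) * gss x
        + N8 x / D8 x * (-x * gss x))) x :=
    (hasDerivAt_TT x).sub (hq.mul (hasDerivAt_gss x))
  convert h using 1
  have hD0 := (D8_pos x).ne'
  field_simp
  unfold N8 D8
  ring

lemma G8_tendsto : Filter.Tendsto G8 Filter.atTop (nhds 0) := by
  have hTT : Filter.Tendsto TT Filter.atTop (nhds 0) := by
    have hW : Filter.Tendsto (fun x => W x) Filter.atTop (nhds (Real.sqrt (Real.pi/2))) := by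
      have := MeasureTheory.intervalIntegral_tendsto_integral_Ioi 0
        (integrable_gss.integrableOn) Filter.tendsto_id
      rwa [integral_gss_Ioi_zero] at this
    have : Filter.Tendsto TT Filter.atTop (nhds (Real.sqrt (Real.pi/2) - Real.sqrt (Real.pi/2))) := by
      have e : TT = fun y => Real.sqrt (Real.pi / 2) - W y := funext TT_eq
      rw [e]
      exact tendsto_const_nhds.sub hW
    simpa using this
  have hRg : Filter.Tendsto (fun x => N8 x / D8 x * gss x) Filter.atTop (nhds 0) := by
    have hub : ∀ᶠ x in Filter.atTop, N8 x / D8 x * gss x ≤ 492 / x := by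
      filter_upwards [Filter.eventually_ge_atTop (1:ℝ)] with x hx
      have hx0 : (0:ℝ) < x := by linarith
      have h1 : N8 x ≤ 492 * x ^ 7 := by unfold N8; nlinarith [pow_le_pow_right₀ hx (show 1 ≤ 7 by norm_num), pow_le_pow_right₀ hx (show 3 ≤ 7 by norm_num), pow_le_pow_right₀ hx (show 5 ≤ 7 by norm_num)]
      have h2 : x ^ 8 ≤ D8 x := by unfold D8; nlinarith [sq_nonneg x, sq_nonneg (x^2), sq_nonneg (x^3)]
      have h3 : gss x ≤ 1 := by
        unfold gss
        rw [show (1:ℝ) = Real.exp 0 by simp]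
        exact Real.exp_le_exp.2 (by nlinarith)
      have h4 : N8 x / D8 x ≤ 492 / x := by
        rw [div_le_div_iff₀ (D8_pos x) hx0]
        calc N8 x * x ≤ 492 * x ^ 7 * x := mul_le_mul_of_nonneg_right h1 hx0.le
          _ = 492 * x ^ 8 := by ring
          _ ≤ 492 * D8 x := by nlinarith
      have hN : 0 ≤ N8 x := by
        unfold N8
        nlinarith [pow_nonneg hx0.le 3, pow_nonneg hx0.le 5, pow_nonneg hx0.le 7]
      calc N8 x / D8 x * gss x ≤ N8 x / D8 x * 1 := by
            apply mul_le_mul_of_nonneg_left h3 (div_nonneg hN (D8_pos x).le)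
        _ = N8 x / D8 x := mul_one _
        _ ≤ 492 / x := h4
    have hlb : ∀ᶠ x in Filter.atTop, 0 ≤ N8 x / D8 x * gss x := by
      filter_upwards [Filter.eventually_ge_atTop (0:ℝ)] with x hx
      have hN : 0 ≤ N8 x := by
        unfold N8
        nlinarith [pow_nonneg hx 3, pow_nonneg hx 5, pow_nonneg hx 7]
      exact mul_nonneg (div_nonneg hN (D8_pos x).le) (gss_pos x).le
    have htop : Filter.Tendsto (fun x : ℝ => 492 / x) Filter.atTop (nhds 0) :=
      tendsto_const_nhds.div_atTop Filter.tendsto_id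
    exact tendsto_of_tendsto_of_tendsto_of_le_of_le' tendsto_const_nhds htop hlb hub
  have e : G8 = fun x => TT x - N8 x / D8 x * gss x := rfl
  rw [e]
  simpa using hTT.sub hRg

lemma G8_nonneg (x : ℝ) : 0 ≤ G8 x := by
  have hanti : ∀ y z : ℝ, y ≤ z → G8 z ≤ G8 y := by
    intro y z hyz
    have hdiff : ∀ w : ℝ, HasDerivAt G8 (-(40320 / (D8 w) ^ 2) * gss w) w := hasDerivAt_G8
    have := antitone_of_deriv_nonpos (f := G8) (fun w => (hdiff w).differentiableAt) ?_ hyz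
    · exact this
    · intro w
      rw [(hdiff w).deriv]
      have h1 : 0 < 40320 / (D8 w) ^ 2 := div_pos (by norm_num) (pow_pos (D8_pos w) 2)
      nlinarith [mul_pos h1 (gss_pos w)]
  exact le_of_tendsto G8_tendsto (Filter.eventually_atTop.2 ⟨x, fun y hy => hanti x y hy⟩)

lemma mills_ge_R8 (x : ℝ) : N8 x / D8 x ≤ mills x := by
  have h := G8_nonneg x
  unfold G8 at h
  have h2 : N8 x / D8 x * gss x ≤ TT x := by linarith
  rw [mills_eq x]
  calc N8 x / D8 x = N8 x / D8 x * gss x * Real.exp (x ^ 2 / 2) := by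
        rw [mul_assoc, gss_mul_exp, mul_one]
    _ ≤ TT x * Real.exp (x ^ 2 / 2) := by
        apply mul_le_mul_of_nonneg_right h2 (Real.exp_pos _).le

lemma mills_nonneg (x : ℝ) : 0 ≤ mills x := by
  rw [mills_eq x]
  exact mul_nonneg (TT_nonneg x) (Real.exp_pos _).le
/-! Numerical certificates -/

noncomputable def b0 : ℝ := 1.1615278892751869

noncomputable def aCoef (i : ℕ) : ℝ := (-1) ^ i / (2 ^ i * (i.factorial : ℝ))

noncomputable def cTail : ℝ := 17 / (2 ^ 16 * 20922789888000 * 16)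

lemma gss_enclose (t : ℝ) (ht : t ^ 2 ≤ 2) :
    |gss t - ∑ i ∈ Finset.range 16, aCoef i * t ^ (2 * i)| ≤ cTail * t ^ 32 := by
  have habs : |(-t ^ 2 / 2 : ℝ)| = t ^ 2 / 2 := by
    rw [show (-t ^ 2 / 2 : ℝ) = -(t ^ 2 / 2) by ring, abs_neg, abs_of_nonneg (by positivity)]
  have hb : |(-t ^ 2 / 2 : ℝ)| ≤ 1 := by rw [habs]; linarith
  have h := Real.exp_bound hb (n := 16) (by norm_num)
  have hsum : ∑ m ∈ Finset.range 16, (-t ^ 2 / 2) ^ m / (m.factorial : ℝ)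
      = ∑ i ∈ Finset.range 16, aCoef i * t ^ (2 * i) := by
    refine Finset.sum_congr rfl fun m _ => ?_
    unfold aCoef
    rw [show (-t ^ 2 / 2 : ℝ) = -(t ^ 2 / 2) by ring, neg_pow, div_pow, pow_mul]
    ring
  rw [hsum] at h
  have hgss : gss t = Real.exp (-t ^ 2 / 2) := rfl
  rw [← hgss] at h
  refine le_trans h (le_of_eq ?_)
  rw [habs, div_pow, ← pow_mul]
  unfold cTail
  norm_num [Nat.factorial]
  ring
lemma cont_poly_up : Continuous (fun t : ℝ => (∑ i ∈ Finset.range 16, aCoef i * t ^ (2 * i)) + cTail * t ^ 32) := by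
  refine Continuous.add ?_ ((continuous_const.mul (continuous_pow 32)))
  exact continuous_finset_sum _ fun i _ => (continuous_const.mul (continuous_pow (2 * i)))

lemma cont_poly_lo : Continuous (fun t : ℝ => (∑ i ∈ Finset.range 16, aCoef i * t ^ (2 * i)) - cTail * t ^ 32) := by
  refine Continuous.sub ?_ ((continuous_const.mul (continuous_pow 32)))
  exact continuous_finset_sum _ fun i _ => (continuous_const.mul (continuous_pow (2 * i)))

lemma int_poly_base (b : ℝ) : ∫ t in (0:ℝ)..b, (∑ i ∈ Finset.range 16, aCoef i * t ^ (2 * i))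
    = ∑ i ∈ Finset.range 16, aCoef i * b ^ (2 * i + 1) / (2 * i + 1) := by
  rw [intervalIntegral.integral_finset_sum]
  · refine Finset.sum_congr rfl fun i _ => ?_
    rw [intervalIntegral.integral_const_mul, integral_pow]
    rw [zero_pow (Nat.succ_ne_zero _)]
    push_cast
    ring
  · intro i _
    exact ((continuous_const.mul (continuous_pow (2 * i)))).intervalIntegrable _ _

lemma int_pow32 (b : ℝ) : ∫ t in (0:ℝ)..b, cTail * t ^ 32 = cTail * b ^ 33 / 33 := by
  rw [intervalIntegral.integral_const_mul, integral_pow]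
  norm_num
  ring

lemma W_b0_le : W b0 ≤ 0.945716647331925507259 := by
  have hb0 : (0:ℝ) ≤ b0 := by unfold b0; norm_num
  have hmono : W b0 ≤ ∫ t in (0:ℝ)..b0, ((∑ i ∈ Finset.range 16, aCoef i * t ^ (2 * i)) + cTail * t ^ 32) := by
    refine intervalIntegral.integral_mono_on hb0 (gss_cont.intervalIntegrable _ _)
      (cont_poly_up.intervalIntegrable _ _) fun t ht => ?_
    have ht2 : t ^ 2 ≤ 2 := by
      have h1 : t ≤ b0 := ht.2
      have h0 : 0 ≤ t := ht.1
      nlinarith [show b0 ≤ 1.17 by unfold b0; norm_num]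
    have h := (abs_le.1 (gss_enclose t ht2)).2
    linarith
  have heval : ∫ t in (0:ℝ)..b0, ((∑ i ∈ Finset.range 16, aCoef i * t ^ (2 * i)) + cTail * t ^ 32)
      = (∑ i ∈ Finset.range 16, aCoef i * b0 ^ (2 * i + 1) / (2 * i + 1)) + cTail * b0 ^ 33 / 33 := by
    rw [intervalIntegral.integral_add (f := fun t => ∑ i ∈ Finset.range 16, aCoef i * t ^ (2 * i)) (g := fun t => cTail * t ^ 32)
      ((continuous_finset_sum _ fun i _ => (continuous_const.mul (continuous_pow (2 * i)))).intervalIntegrable _ _)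
      (((continuous_const.mul (continuous_pow 32))).intervalIntegrable _ _), int_poly_base, int_pow32]
  rw [heval] at hmono
  refine le_trans hmono ?_
  unfold aCoef cTail b0
  rw [Finset.sum_range_succ, Finset.sum_range_succ, Finset.sum_range_succ, Finset.sum_range_succ,
    Finset.sum_range_succ, Finset.sum_range_succ, Finset.sum_range_succ, Finset.sum_range_succ,
    Finset.sum_range_succ, Finset.sum_range_succ, Finset.sum_range_succ, Finset.sum_range_succ,
    Finset.sum_range_succ, Finset.sum_range_succ, Finset.sum_range_succ, Finset.sum_range_succ,
    Finset.sum_range_zero]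
  norm_num [Nat.factorial]

lemma W_b0_ge : 0.945716647331925500685 ≤ W b0 := by
  have hb0 : (0:ℝ) ≤ b0 := by unfold b0; norm_num
  have hmono : (∫ t in (0:ℝ)..b0, ((∑ i ∈ Finset.range 16, aCoef i * t ^ (2 * i)) - cTail * t ^ 32)) ≤ W b0 := by
    refine intervalIntegral.integral_mono_on hb0 (cont_poly_lo.intervalIntegrable _ _)
      (gss_cont.intervalIntegrable _ _) fun t ht => ?_
    have ht2 : t ^ 2 ≤ 2 := by
      have h1 : t ≤ b0 := ht.2
      have h0 : 0 ≤ t := ht.1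
      nlinarith [show b0 ≤ 1.17 by unfold b0; norm_num]
    have h := (abs_le.1 (gss_enclose t ht2)).1
    linarith
  have heval : ∫ t in (0:ℝ)..b0, ((∑ i ∈ Finset.range 16, aCoef i * t ^ (2 * i)) - cTail * t ^ 32)
      = (∑ i ∈ Finset.range 16, aCoef i * b0 ^ (2 * i + 1) / (2 * i + 1)) - cTail * b0 ^ 33 / 33 := by
    rw [intervalIntegral.integral_sub (f := fun t => ∑ i ∈ Finset.range 16, aCoef i * t ^ (2 * i)) (g := fun t => cTail * t ^ 32)
      ((continuous_finset_sum _ fun i _ => (continuous_const.mul (continuous_pow (2 * i)))).intervalIntegrable _ _)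
      (((continuous_const.mul (continuous_pow 32))).intervalIntegrable _ _), int_poly_base, int_pow32]
  rw [heval] at hmono
  refine le_trans ?_ hmono
  unfold aCoef cTail b0
  rw [Finset.sum_range_succ, Finset.sum_range_succ, Finset.sum_range_succ, Finset.sum_range_succ,
    Finset.sum_range_succ, Finset.sum_range_succ, Finset.sum_range_succ, Finset.sum_range_succ,
    Finset.sum_range_succ, Finset.sum_range_succ, Finset.sum_range_succ, Finset.sum_range_succ,
    Finset.sum_range_succ, Finset.sum_range_succ, Finset.sum_range_succ, Finset.sum_range_succ,
    Finset.sum_range_zero]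
  norm_num [Nat.factorial]
lemma exp_b0_bounds : 0.509373612568798236543 ≤ Real.exp (-b0 ^ 2 / 2) ∧
    Real.exp (-b0 ^ 2 / 2) ≤ 0.509373612568798423272 := by
  have habs : |(-b0 ^ 2 / 2 : ℝ)| = b0 ^ 2 / 2 := by
    rw [show (-b0 ^ 2 / 2 : ℝ) = -(b0 ^ 2 / 2) by ring, abs_neg,
      abs_of_nonneg (by unfold b0; norm_num)]
  have hb : |(-b0 ^ 2 / 2 : ℝ)| ≤ 1 := by rw [habs]; unfold b0; norm_num
  have h := abs_le.1 (Real.exp_bound hb (n := 16) (by norm_num))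
  rw [habs] at h
  obtain ⟨h1, h2⟩ := h
  constructor
  · refine le_trans ?_ (by linarith : (∑ m ∈ Finset.range 16, (-b0 ^ 2 / 2) ^ m / (m.factorial : ℝ)) - (b0 ^ 2 / 2) ^ 16 * (17 / ((Nat.factorial 16 : ℝ) * 16)) ≤ Real.exp (-b0 ^ 2 / 2))
    rw [Finset.sum_range_succ, Finset.sum_range_succ, Finset.sum_range_succ, Finset.sum_range_succ,
      Finset.sum_range_succ, Finset.sum_range_succ, Finset.sum_range_succ, Finset.sum_range_succ,
      Finset.sum_range_succ, Finset.sum_range_succ, Finset.sum_range_succ, Finset.sum_range_succ,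
      Finset.sum_range_succ, Finset.sum_range_succ, Finset.sum_range_succ, Finset.sum_range_succ,
      Finset.sum_range_zero]
    unfold b0
    norm_num [Nat.factorial]
  · refine le_trans (by linarith : Real.exp (-b0 ^ 2 / 2) ≤ (∑ m ∈ Finset.range 16, (-b0 ^ 2 / 2) ^ m / (m.factorial : ℝ)) + (b0 ^ 2 / 2) ^ 16 * (17 / ((Nat.factorial 16 : ℝ) * 16))) ?_
    rw [Finset.sum_range_succ, Finset.sum_range_succ, Finset.sum_range_succ, Finset.sum_range_succ,
      Finset.sum_range_succ, Finset.sum_range_succ, Finset.sum_range_succ, Finset.sum_range_succ,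
      Finset.sum_range_succ, Finset.sum_range_succ, Finset.sum_range_succ, Finset.sum_range_succ,
      Finset.sum_range_succ, Finset.sum_range_succ, Finset.sum_range_succ, Finset.sum_range_succ,
      Finset.sum_range_zero]
    unfold b0
    norm_num [Nat.factorial]

lemma sqrt_pi2_lb : (1.253314137315500251207 : ℝ) ≤ Real.sqrt (Real.pi / 2) := by
  have h : ((1.253314137315500251207 : ℝ)) ^ 2 ≤ Real.pi / 2 := by
    nlinarith [Real.pi_gt_d20]
  nlinarith [Real.sq_sqrt (show (0:ℝ) ≤ Real.pi / 2 by positivity),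
    Real.sqrt_nonneg (Real.pi / 2), sq_nonneg (Real.sqrt (Real.pi / 2) - 1.253314137315500251207)]

lemma sqrt_pi2_ub : Real.sqrt (Real.pi / 2) ≤ 1.25331413731550025121 := by
  have h : Real.pi / 2 ≤ ((1.25331413731550025121 : ℝ)) ^ 2 := by
    nlinarith [Real.pi_lt_d20]
  calc Real.sqrt (Real.pi / 2) ≤ Real.sqrt ((1.25331413731550025121 : ℝ) ^ 2) :=
        Real.sqrt_le_sqrt h
    _ = 1.25331413731550025121 := Real.sqrt_sq (by norm_num)

lemma mills_b0_eq : mills b0 = (Real.sqrt (Real.pi / 2) - W b0) / Real.exp (-b0 ^ 2 / 2) := by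
  rw [mills_eq, TT_eq, eq_div_iff (Real.exp_pos _).ne', mul_assoc, ← Real.exp_add,
    show b0 ^ 2 / 2 + -b0 ^ 2 / 2 = 0 by ring, Real.exp_zero, mul_one]

lemma fp_b0_neg : FP b0 < 0 := by
  have hE := exp_b0_bounds
  have hEpos : (0:ℝ) < Real.exp (-b0 ^ 2 / 2) := Real.exp_pos _
  have hA_lb : (1.253314137315500251207 : ℝ) - 0.945716647331925507259 ≤ Real.sqrt (Real.pi / 2) - W b0 := by
    have := sqrt_pi2_lb; have := W_b0_le; linarith
  have hb0pos : (0:ℝ) < b0 := by unfold b0; norm_num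
  unfold FP
  rw [mills_b0_eq]
  rw [sub_neg, ← mul_div_assoc, lt_div_iff₀ hEpos]
  have hcoef : (0:ℝ) < 2 * b0 + b0 ^ 3 := by positivity
  have key : (1 + b0 ^ 2) * Real.exp (-b0 ^ 2 / 2) <
      (2 * b0 + b0 ^ 3) * (Real.sqrt (Real.pi / 2) - W b0) := by
    calc (1 + b0 ^ 2) * Real.exp (-b0 ^ 2 / 2)
        ≤ (1 + b0 ^ 2) * 0.509373612568798423272 := by
          apply mul_le_mul_of_nonneg_left hE.2 (by positivity)
      _ < (2 * b0 + b0 ^ 3) * ((1.253314137315500251207 : ℝ) - 0.945716647331925507259) := by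
          unfold b0; norm_num
      _ ≤ (2 * b0 + b0 ^ 3) * (Real.sqrt (Real.pi / 2) - W b0) := by
          apply mul_le_mul_of_nonneg_left hA_lb hcoef.le
  exact key

lemma f_b0_ge : (0.346813047097384 : ℝ) ≤ fMills b0 := by
  have hE := exp_b0_bounds
  have hEpos : (0:ℝ) < Real.exp (-b0 ^ 2 / 2) := Real.exp_pos _
  have hA_ub : Real.sqrt (Real.pi / 2) - W b0 ≤ (1.25331413731550025121 : ℝ) - 0.945716647331925500685 := by
    have := sqrt_pi2_ub; have := W_b0_ge; linarith
  have hA_nonneg : 0 ≤ Real.sqrt (Real.pi / 2) - W b0 := by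
    have h := mills_nonneg b0
    rw [mills_b0_eq] at h
    by_contra hneg
    push_neg at hneg
    nlinarith [div_neg_of_neg_of_pos hneg hEpos]
  show (0.346813047097384 : ℝ) ≤ b0 - b0 ^ 2 * mills b0
  rw [mills_b0_eq]
  have key : b0 ^ 2 * ((Real.sqrt (Real.pi / 2) - W b0) / Real.exp (-b0 ^ 2 / 2))
      ≤ b0 - 0.346813047097384 := by
    rw [← mul_div_assoc, div_le_iff₀ hEpos]
    calc b0 ^ 2 * (Real.sqrt (Real.pi / 2) - W b0)
        ≤ b0 ^ 2 * ((1.25331413731550025121 : ℝ) - 0.945716647331925500685) := by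
          apply mul_le_mul_of_nonneg_left hA_ub (by positivity)
      _ ≤ (b0 - 0.346813047097384) * 0.509373612568798236543 := by
          unfold b0; norm_num
      _ ≤ (b0 - 0.346813047097384) * Real.exp (-b0 ^ 2 / 2) := by
          apply mul_le_mul_of_nonneg_left hE.1
          unfold b0; norm_num
  linarith
lemma fpp_neg {x : ℝ} (hx0 : 0 < x) (hx2 : x ≤ 2) :
    4 * x + x ^ 3 - (2 + 5 * x ^ 2 + x ^ 4) * mills x < 0 := by
  have hm := mills_ge_R8 x
  have hP : (0:ℝ) < 2 + 5 * x ^ 2 + x ^ 4 := by positivity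
  have h1 : 4 * x + x ^ 3 < (2 + 5 * x ^ 2 + x ^ 4) * (N8 x / D8 x) := by
    rw [mul_div_assoc', lt_div_iff₀ (D8_pos x)]
    have h5 : x ^ 2 ≤ 4 := by nlinarith
    have h6 : x ^ 4 ≤ 16 := by nlinarith
    have h7 : 20 * x * x ^ 2 ≤ 20 * x * 4 := by
      apply mul_le_mul_of_nonneg_left h5 (by positivity)
    have h8 : 2 * x * x ^ 4 ≤ 2 * x * 16 := by
      apply mul_le_mul_of_nonneg_left h6 (by positivity)
    unfold N8 D8
    nlinarith [h7, h8]
  have h2 : (2 + 5 * x ^ 2 + x ^ 4) * (N8 x / D8 x) ≤ (2 + 5 * x ^ 2 + x ^ 4) * mills x :=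
    mul_le_mul_of_nonneg_left hm hP.le
  linarith

lemma FP_neg_on {x : ℝ} (h1 : b0 ≤ x) (h2 : x ≤ 7/4) : FP x < 0 := by
  have hb0pos : (0:ℝ) < b0 := by unfold b0; norm_num
  have hb074 : b0 < 7/4 := by unfold b0; norm_num
  have hanti : StrictAntiOn FP (Set.Icc b0 (7/4)) := by
    refine strictAntiOn_of_deriv_neg (convex_Icc _ _)
      (fun y _ => (hasDerivAt_FP y).continuousAt.continuousWithinAt) (fun y hy => ?_)
    rw [interior_Icc] at hy
    rw [(hasDerivAt_FP y).deriv]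
    exact fpp_neg (lt_trans hb0pos hy.1) (by linarith [hy.2])
  rcases eq_or_lt_of_le h1 with he | hlt
  · rw [← he]; exact fp_b0_neg
  · have := hanti (Set.left_mem_Icc.2 (by linarith)) ⟨h1, h2⟩ hlt
    linarith [fp_b0_neg]

lemma crit_val {x : ℝ} (hx : 0 < x) (h : FP x = 0) : fMills x = x / (2 + x ^ 2) := by
  unfold FP at h
  have h2 : (0:ℝ) < 2 + x ^ 2 := by positivity
  show x - x ^ 2 * mills x = x / (2 + x ^ 2)
  rw [eq_div_iff h2.ne']
  linear_combination x * h

lemma tail_le {x : ℝ} (hx : 7/4 ≤ x) : fMills x ≤ 0.346813047097549 := by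
  have hm := mills_ge_R8 x
  have hxx : (0:ℝ) ≤ x ^ 2 := sq_nonneg x
  have h1 : fMills x ≤ x - x ^ 2 * (N8 x / D8 x) := by
    unfold fMills
    have := mul_le_mul_of_nonneg_left hm hxx
    linarith
  refine le_trans h1 ?_
  have key : x - x ^ 2 * (N8 x / D8 x) = (x * D8 x - x ^ 2 * N8 x) / D8 x := by
    rw [eq_div_iff (D8_pos x).ne', sub_mul, mul_assoc, div_mul_cancel₀ _ (D8_pos x).ne']
  rw [key, div_le_iff₀ (D8_pos x)]
  have hu : (0:ℝ) ≤ x - 7/4 := by linarith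
  unfold N8 D8
  nlinarith [pow_nonneg hu 2, pow_nonneg hu 3, pow_nonneg hu 4, pow_nonneg hu 5,
    pow_nonneg hu 6, pow_nonneg hu 7, pow_nonneg hu 8, hu]

lemma fMills_zero : fMills 0 = 0 := by
  show (0:ℝ) - 0 ^ 2 * mills 0 = 0
  norm_num

lemma upper_pointwise {x : ℝ} (hx : 0 ≤ x) : fMills x ≤ 0.346813047097549 := by
  rcases le_total (7/4 : ℝ) x with h74 | h74
  · exact tail_le h74
  · -- max on [0, 7/4]
    obtain ⟨xc, hxc, hmax⟩ := (isCompact_Icc : IsCompact (Set.Icc (0:ℝ) (7/4))).exists_isMaxOn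
      (Set.nonempty_Icc.2 (by norm_num))
      (fun y _ => (hasDerivAt_fMills y).continuousAt.continuousWithinAt)
    have hfx : fMills x ≤ fMills xc := hmax ⟨hx, h74⟩
    have hxcUc : fMills xc ≤ 0.346813047097549 := by
      rcases eq_or_lt_of_le hxc.1 with he0 | h0
      · rw [← he0, fMills_zero]; norm_num
      rcases eq_or_lt_of_le hxc.2 with he1 | h1
      · rw [he1]; exact tail_le le_rfl
      · have hloc : IsLocalMax fMills xc := hmax.isLocalMax (Icc_mem_nhds h0 h1)
        have hd : deriv fMills xc = 0 := hloc.deriv_eq_zero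
        have hFP : FP xc = 0 := by rw [← (hasDerivAt_fMills xc).deriv]; exact hd
        have hxcb0 : xc < b0 := by
          by_contra hc
          push_neg at hc
          exact absurd hFP (ne_of_lt (FP_neg_on hc h1.le))
        have hxcb : xc ≤ 1.1615278892751869 := by
          unfold b0 at hxcb0; linarith
        rw [crit_val h0 hFP]
        rw [div_le_iff₀ (by positivity)]
        have hf1 : (0:ℝ) ≤ 1.1615278892751869 - xc := by linarith
        have hf2 : (0:ℝ) ≤ 1 - 0.346813047097549 * (xc + 1.1615278892751869) := by
          nlinarith
        nlinarith [mul_nonneg hf1 hf2]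
    linarith

lemma bddAbove_f : BddAbove (fMills '' Set.Ici 0) := by
  refine ⟨7/4, fun y hy => ?_⟩
  obtain ⟨x, hx, rfl⟩ := hy
  rcases le_total (7/4 : ℝ) x with h | h
  · linarith [tail_le h, (by norm_num : (0.346813047097549:ℝ) ≤ 7/4)]
  · have : x ^ 2 * mills x ≥ 0 := mul_nonneg (sq_nonneg x) (mills_nonneg x)
    show x - x ^ 2 * mills x ≤ 7/4
    linarith


/-- Numerical bounds on `μ`, the maximum value of `f(x) = x - x² M(x)` over `[0, ∞)`. -/
theorem muMills_bounds :
    0.346813047097384 ≤ muMills ∧ muMills ≤ 0.346813047097549 := by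
  constructor
  · have hb0 : b0 ∈ Set.Ici (0:ℝ) := by unfold b0; norm_num
    have hmem : fMills b0 ∈ fMills '' Set.Ici 0 := ⟨b0, hb0, rfl⟩
    have h := le_csSup bddAbove_f hmem
    unfold muMills
    linarith [f_b0_ge]
  · unfold muMills
    refine csSup_le ⟨fMills 0, ⟨0, Set.self_mem_Ici, rfl⟩⟩ ?_
    rintro y ⟨x, hx, rfl⟩
    exact upper_pointwise hx
end

section
/- The function E_C is Schur concave on the probability simplex: for all p, q ∈ 𝒫ₙ, if p ≺ q (p is majorized by q) then E_C(p) ≥ E_C(q). -/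
open Real MeasureTheory Finset

lemma EC_comp_equiv {n : ℕ} (p : Fin n → ℝ) (e : Equiv.Perm (Fin n)) :
    EC (p ∘ e) = EC p := by
  unfold EC
  refine Finset.sum_bij' (fun S _ => S.image e) (fun S _ => S.image e.symm) ?_ ?_ ?_ ?_ ?_
  · intro S hS
    rw [mem_filter] at *
    exact ⟨mem_powerset.2 (subset_univ _), hS.2.image _⟩
  · intro S hS
    rw [mem_filter] at *
    exact ⟨mem_powerset.2 (subset_univ _), hS.2.image _⟩
  · intro S _
    simp [Finset.image_image]
  · intro S _
    simp [Finset.image_image]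
  · intro S _
    rw [Finset.card_image_of_injective _ e.injective,
      Finset.prod_image (fun a _ b _ h => e.injective h)]
    simp

lemma EC_decomp {n : ℕ} (p : Fin n → ℝ) {i j : Fin n} (hij : i ≠ j)
    (hp : ∀ t, 0 ≤ p t) :
    ∃ A B C : ℝ, 0 ≤ C ∧ ∀ a b : ℝ,
      EC (Function.update (Function.update p i a) j b) = A + B * (a + b) + C * (a * b) := by
  classical
  set R : Finset (Fin n) := (univ.erase i).erase j with hR
  have hjR : j ∉ R := Finset.notMem_erase _ _
  have hiR : i ∉ R := fun h => Finset.notMem_erase i univ (Finset.mem_of_mem_erase h)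
  have hijR : i ∉ insert j R := by
    simp [Finset.mem_insert, hij, hiR]
  have huniv : (univ : Finset (Fin n)) = insert i (insert j R) := by
    rw [hR, Finset.insert_erase (Finset.mem_erase.2 ⟨hij.symm, Finset.mem_univ j⟩),
      Finset.insert_erase (Finset.mem_univ i)]
  refine ⟨∑ T ∈ R.powerset, (if T.Nonempty then ((T.card - 1).factorial : ℝ) * ∏ t ∈ T, p t else 0),
    ∑ T ∈ R.powerset, (T.card.factorial : ℝ) * ∏ t ∈ T, p t,
    ∑ T ∈ R.powerset, ((T.card + 1).factorial : ℝ) * ∏ t ∈ T, p t, ?_, ?_⟩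
  · apply Finset.sum_nonneg
    intro T _
    exact mul_nonneg (by positivity) (Finset.prod_nonneg fun t _ => hp t)
  intro a b
  set p' := Function.update (Function.update p i a) j b with hp'
  have hpi : p' i = a := by
    rw [hp', Function.update_of_ne hij, Function.update_self]
  have hpj : p' j = b := by rw [hp', Function.update_self]
  have hpt : ∀ t, t ≠ i → t ≠ j → p' t = p t := by
    intro t h1 h2
    rw [hp', Function.update_of_ne h2, Function.update_of_ne h1]
  have hprodT : ∀ T ∈ R.powerset, ∏ t ∈ T, p' t = ∏ t ∈ T, p t := by
    intro T hT
    rw [mem_powerset] at hT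
    refine Finset.prod_congr rfl fun t ht => ?_
    have htR := hT ht
    exact hpt t (fun h => hiR (h ▸ htR)) (fun h => hjR (h ▸ htR))
  have key : EC p' = ∑ S ∈ (univ : Finset (Fin n)).powerset,
      (if S.Nonempty then ((S.card - 1).factorial : ℝ) * ∏ t ∈ S, p' t else 0) := by
    rw [EC, Finset.sum_filter]
  rw [key, huniv, Finset.sum_powerset_insert hijR, Finset.sum_powerset_insert hjR,
    Finset.sum_powerset_insert hjR]
  have e1 : ∑ T ∈ R.powerset, (if (insert j T).Nonempty then
      (((insert j T).card - 1).factorial : ℝ) * ∏ t ∈ insert j T, p' t else 0)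
      = ∑ T ∈ R.powerset, ((T.card.factorial : ℝ) * ∏ t ∈ T, p t) * b := by
    refine Finset.sum_congr rfl fun T hT => ?_
    have hjT : j ∉ T := fun h => hjR (mem_powerset.1 hT h)
    rw [if_pos (insert_nonempty _ _), Finset.card_insert_of_notMem hjT,
      Finset.prod_insert hjT, Nat.add_sub_cancel, hpj, hprodT T hT]
    ring
  have e0 : ∑ T ∈ R.powerset, (if T.Nonempty then
      ((T.card - 1).factorial : ℝ) * ∏ t ∈ T, p' t else 0)
      = ∑ T ∈ R.powerset, (if T.Nonempty then ((T.card - 1).factorial : ℝ) * ∏ t ∈ T, p t else 0) := by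
    refine Finset.sum_congr rfl fun T hT => ?_
    rw [hprodT T hT]
  have e2 : ∑ T ∈ R.powerset, (if (insert i T).Nonempty then
      (((insert i T).card - 1).factorial : ℝ) * ∏ t ∈ insert i T, p' t else 0)
      = ∑ T ∈ R.powerset, ((T.card.factorial : ℝ) * ∏ t ∈ T, p t) * a := by
    refine Finset.sum_congr rfl fun T hT => ?_
    have hiT : i ∉ T := fun h => hiR (mem_powerset.1 hT h)
    rw [if_pos (insert_nonempty _ _), Finset.card_insert_of_notMem hiT,
      Finset.prod_insert hiT, Nat.add_sub_cancel, hpi, hprodT T hT]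
    ring
  have e3 : ∑ T ∈ R.powerset, (if (insert i (insert j T)).Nonempty then
      (((insert i (insert j T)).card - 1).factorial : ℝ) * ∏ t ∈ insert i (insert j T), p' t else 0)
      = ∑ T ∈ R.powerset, (((T.card + 1).factorial : ℝ) * ∏ t ∈ T, p t) * (a * b) := by
    refine Finset.sum_congr rfl fun T hT => ?_
    have hjT : j ∉ T := fun h => hjR (mem_powerset.1 hT h)
    have hiT : i ∉ insert j T := by
      simp only [Finset.mem_insert]
      push_neg
      exact ⟨hij, fun h => hiR (mem_powerset.1 hT h)⟩
    rw [if_pos (insert_nonempty _ _), Finset.card_insert_of_notMem hiT,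
      Finset.card_insert_of_notMem hjT, Finset.prod_insert hiT, Finset.prod_insert hjT,
      Nat.add_sub_cancel, hpi, hpj, hprodT T hT]
    ring
  rw [e0, e1, e2, e3, ← Finset.sum_mul, ← Finset.sum_mul, ← Finset.sum_mul]
  ring

lemma EC_transfer {n : ℕ} (p : Fin n → ℝ) {i j : Fin n} (hij : i ≠ j) (hp : ∀ t, 0 ≤ p t)
    (a b : ℝ) (hsum : a + b = p i + p j) (hprod : p i * p j ≤ a * b) :
    EC p ≤ EC (Function.update (Function.update p i a) j b) := by
  obtain ⟨A, B, C, hC, h⟩ := EC_decomp p hij hp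
  have h0 : EC p = A + B * (p i + p j) + C * (p i * p j) := by
    have := h (p i) (p j)
    rwa [Function.update_eq_self, Function.update_eq_self] at this
  rw [h a b, h0, hsum]
  nlinarith

noncomputable def pfx {n : ℕ} (x : Fin n → ℝ) (k : ℕ) : ℝ :=
  ∑ j ∈ Finset.univ.filter (fun j : Fin n => (j : ℕ) < k), x j

lemma pfx_succ {n : ℕ} (x : Fin n → ℝ) (j : Fin n) :
    pfx x ((j : ℕ) + 1) = pfx x (j : ℕ) + x j := by
  unfold pfx
  have h : Finset.univ.filter (fun i : Fin n => (i : ℕ) < (j : ℕ) + 1)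
      = insert j (Finset.univ.filter (fun i : Fin n => (i : ℕ) < (j : ℕ))) := by
    ext i
    simp only [mem_filter, mem_univ, true_and, mem_insert, Fin.ext_iff]
    omega
  rw [h, Finset.sum_insert (by simp)]
  ring

lemma pfx_diff {n : ℕ} (x : Fin n → ℝ) {m₁ m₂ : ℕ} (h : m₁ ≤ m₂) :
    pfx x m₂ = pfx x m₁ +
      ∑ i ∈ Finset.univ.filter (fun i : Fin n => m₁ ≤ (i : ℕ) ∧ (i : ℕ) < m₂), x i := by
  unfold pfx
  rw [← Finset.sum_filter_add_sum_filter_not (Finset.univ.filter (fun i : Fin n => (i : ℕ) < m₂))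
    (fun i => (i : ℕ) < m₁) x, Finset.filter_filter, Finset.filter_filter]
  congr 1
  · apply Finset.sum_congr _ (fun _ _ => rfl)
    apply Finset.filter_congr
    intro i _
    constructor <;> (intro hh; omega)
  · apply Finset.sum_congr _ (fun _ _ => rfl)
    apply Finset.filter_congr
    intro i _
    constructor <;> (intro hh; omega)

lemma pfx_total {n : ℕ} (x : Fin n → ℝ) : pfx x n = ∑ i, x i := by
  unfold pfx
  apply Finset.sum_congr _ (fun _ _ => rfl)
  exact Finset.filter_true_of_mem (fun i _ => i.is_lt)

lemma EC_main {n : ℕ} (y : Fin n → ℝ) (hy0 : ∀ i, 0 ≤ y i) (hyA : Antitone y) :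
    ∀ N : ℕ, ∀ x : Fin n → ℝ, (∀ i, 0 ≤ x i) →
    (∀ k : ℕ, pfx y k ≤ pfx x k) → (∑ i, x i = ∑ i, y i) →
    (Finset.univ.filter (fun i => x i ≠ y i)).card ≤ N → EC x ≤ EC y := by
  classical
  intro N
  induction N with
  | zero =>
    intro x _ _ _ hcard
    have hx : x = y := by
      funext i
      by_contra hne
      have hi : i ∈ Finset.univ.filter (fun i => x i ≠ y i) := by simp [hne]
      have := Finset.card_pos.2 ⟨i, hi⟩
      omega
    rw [hx]
  | succ N ih =>
    intro x hx0 hpfx hsum hcard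
    by_cases hxy : x = y
    · rw [hxy]
    have hJ : (Finset.univ.filter (fun i => y i < x i)).Nonempty := by
      by_contra hJe
      rw [Finset.not_nonempty_iff_eq_empty, Finset.filter_eq_empty_iff] at hJe
      apply hxy
      have hle : ∀ i, x i ≤ y i := fun i => not_lt.1 (hJe (Finset.mem_univ i))
      funext i
      by_contra hne
      have hlt : x i < y i := lt_of_le_of_ne (hle i) hne
      have : ∑ t, x t < ∑ t, y t :=
        Finset.sum_lt_sum (fun t _ => hle t) ⟨i, Finset.mem_univ i, hlt⟩
      linarith
    set j := (Finset.univ.filter (fun i => y i < x i)).max' hJ with hjdef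
    have hjJ : j ∈ Finset.univ.filter (fun i => y i < x i) := Finset.max'_mem _ hJ
    have hjlt : y j < x j := (Finset.mem_filter.1 hjJ).2
    have hDj : pfx y (j : ℕ) ≤ pfx x (j : ℕ) := hpfx _
    have hK : (Finset.univ.filter (fun i : Fin n => (j : ℕ) < (i : ℕ) ∧ x i < y i)).Nonempty := by
      by_contra hKe
      rw [Finset.not_nonempty_iff_eq_empty, Finset.filter_eq_empty_iff] at hKe
      have hge : ∀ i : Fin n, (j : ℕ) < (i : ℕ) → y i ≤ x i := fun i hi =>
        not_lt.1 (fun h => hKe (Finset.mem_univ i) ⟨hi, h⟩)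
      have hjn : (j : ℕ) + 1 ≤ n := j.is_lt
      have hx2 := pfx_diff x hjn
      have hy2 := pfx_diff y hjn
      have hmid : ∑ i ∈ Finset.univ.filter
            (fun i : Fin n => (j : ℕ) + 1 ≤ (i : ℕ) ∧ (i : ℕ) < n), y i
          ≤ ∑ i ∈ Finset.univ.filter
            (fun i : Fin n => (j : ℕ) + 1 ≤ (i : ℕ) ∧ (i : ℕ) < n), x i := by
        apply Finset.sum_le_sum
        intro i hi
        have hcond := (Finset.mem_filter.1 hi).2
        exact hge i (by omega)
      have h1 := pfx_succ x j
      have h2 := pfx_succ y j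
      have h3 := pfx_total x
      have h4 := pfx_total y
      linarith
    set k := (Finset.univ.filter (fun i : Fin n => (j : ℕ) < (i : ℕ) ∧ x i < y i)).min' hK
      with hkdef
    have hkK : k ∈ Finset.univ.filter (fun i : Fin n => (j : ℕ) < (i : ℕ) ∧ x i < y i) :=
      Finset.min'_mem _ hK
    have hjk : (j : ℕ) < (k : ℕ) := (Finset.mem_filter.1 hkK).2.1
    have hklt : x k < y k := (Finset.mem_filter.1 hkK).2.2
    have hjky : y k ≤ y j := hyA (by exact le_of_lt (by rwa [Fin.lt_def]))
    -- middle indices are equal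
    have hmid : ∀ i : Fin n, (j : ℕ) < (i : ℕ) → (i : ℕ) < (k : ℕ) → x i = y i := by
      intro i h1 h2
      have hxle : x i ≤ y i := by
        by_contra h
        push_neg at h
        have hmem : i ∈ Finset.univ.filter (fun i => y i < x i) := by
          rw [Finset.mem_filter]
          exact ⟨Finset.mem_univ i, h⟩
        have hle : i ≤ j := Finset.le_max' _ i hmem
        rw [Fin.le_def] at hle
        omega
      have hyle : ¬ (x i < y i) := by
        intro h
        have hmem : i ∈ Finset.univ.filter (fun i : Fin n => (j : ℕ) < (i : ℕ) ∧ x i < y i) := by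
          rw [Finset.mem_filter]
          exact ⟨Finset.mem_univ i, h1, h⟩
        have hge' : k ≤ i := Finset.min'_le _ i hmem
        rw [Fin.le_def] at hge'
        omega
      exact le_antisymm hxle (not_lt.1 hyle)
    set δ := min (x j - y j) (y k - x k) with hδdef
    have hδ1 : δ ≤ x j - y j := min_le_left _ _
    have hδ2 : δ ≤ y k - x k := min_le_right _ _
    have hδpos : 0 < δ := lt_min (by linarith) (by linarith)
    have hjkne : j ≠ k := fun h => by rw [h] at hjk; omega
    set x' := Function.update (Function.update x j (x j - δ)) k (x k + δ) with hx'def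
    have hx'j : x' j = x j - δ := by
      rw [hx'def, Function.update_of_ne hjkne, Function.update_self]
    have hx'k : x' k = x k + δ := by rw [hx'def, Function.update_self]
    have hx't : ∀ t, t ≠ j → t ≠ k → x' t = x t := by
      intro t h1 h2
      rw [hx'def, Function.update_of_ne h2, Function.update_of_ne h1]
    -- pointwise formula
    have hpt : ∀ i, x' i = x i + (if i = j then -δ else 0) + (if i = k then δ else 0) := by
      intro i
      by_cases h1 : i = j
      · subst h1
        rw [hx'j, if_pos rfl, if_neg hjkne]
        ring
      by_cases h2 : i = k
      · subst h2
        rw [hx'k, if_neg h1, if_pos rfl]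
        ring
      · rw [hx't i h1 h2, if_neg h1, if_neg h2]
        ring
    -- step inequality
    have hstep : EC x ≤ EC x' := by
      apply EC_transfer x hjkne hx0
      · ring
      · nlinarith
    -- nonnegativity of x'
    have hx'0 : ∀ i, 0 ≤ x' i := by
      intro i
      by_cases h1 : i = j
      · subst h1
        rw [hx'j]
        have := hy0 j
        linarith
      by_cases h2 : i = k
      · subst h2
        rw [hx'k]
        have := hx0 k
        linarith
      · rw [hx't i h1 h2]
        exact hx0 i
    -- prefix sums of x'
    have hpfx' : ∀ m : ℕ, pfx x' m = pfx x m + (if (j : ℕ) < m then -δ else 0)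
        + (if (k : ℕ) < m then δ else 0) := by
      intro m
      unfold pfx
      rw [show (∑ i ∈ Finset.univ.filter (fun i : Fin n => (i : ℕ) < m), x' i)
          = ∑ i ∈ Finset.univ.filter (fun i : Fin n => (i : ℕ) < m),
            (x i + (if i = j then -δ else 0) + (if i = k then δ else 0)) from
        Finset.sum_congr rfl (fun i _ => hpt i)]
      rw [Finset.sum_add_distrib, Finset.sum_add_distrib,
        Finset.sum_ite_eq' _ j (fun _ => -δ), Finset.sum_ite_eq' _ k (fun _ => δ)]
      simp only [Finset.mem_filter, Finset.mem_univ, true_and]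
    have hpfxx' : ∀ m : ℕ, pfx y m ≤ pfx x' m := by
      intro m
      rw [hpfx' m]
      by_cases h1 : (j : ℕ) < m
      · by_cases h2 : (k : ℕ) < m
        · rw [if_pos h1, if_pos h2]
          have := hpfx m
          linarith
        · rw [if_pos h1, if_neg h2]
          -- need pfx y m ≤ pfx x m - δ
          have hm1 : (j : ℕ) + 1 ≤ m := h1
          have hx2 := pfx_diff x hm1
          have hy2 := pfx_diff y hm1
          have hmideq : ∑ i ∈ Finset.univ.filter
                (fun i : Fin n => (j : ℕ) + 1 ≤ (i : ℕ) ∧ (i : ℕ) < m), x i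
              = ∑ i ∈ Finset.univ.filter
                (fun i : Fin n => (j : ℕ) + 1 ≤ (i : ℕ) ∧ (i : ℕ) < m), y i := by
            apply Finset.sum_congr rfl
            intro i hi
            have hcond := (Finset.mem_filter.1 hi).2
            exact hmid i (by omega) (by omega)
          have h1s := pfx_succ x j
          have h2s := pfx_succ y j
          linarith
      · rw [if_neg h1, if_neg (show ¬ (k : ℕ) < m by omega)]
        have := hpfx m
        linarith
    -- sum of x'
    have hsum' : ∑ i, x' i = ∑ i, y i := by
      have := hpfx' n
      rw [pfx_total, pfx_total, if_pos j.is_lt, if_pos k.is_lt] at this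
      rw [this]
      linarith
    -- cardinality decreases
    have hsub : ∀ w : Fin n, (w = j ∧ x' j = y j) ∨ (w = k ∧ x' k = y k) →
        (Finset.univ.filter (fun i => x' i ≠ y i)).card ≤ N := by
      intro w hw
      have hwD : w ∈ Finset.univ.filter (fun i => x i ≠ y i) := by
        rcases hw with ⟨hwj, _⟩ | ⟨hwk, _⟩
        · subst hwj
          simp [ne_of_gt hjlt]
        · subst hwk
          simp [ne_of_lt hklt]
      have hss : Finset.univ.filter (fun i => x' i ≠ y i)
          ⊆ (Finset.univ.filter (fun i => x i ≠ y i)).erase w := by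
        intro i hi
        have hine : x' i ≠ y i := (Finset.mem_filter.1 hi).2
        rw [Finset.mem_erase]
        constructor
        · rintro rfl
          rcases hw with ⟨hwj, he⟩ | ⟨hwk, he⟩
          · exact hine (hwj ▸ he)
          · exact hine (hwk ▸ he)
        · rw [Finset.mem_filter]
          refine ⟨Finset.mem_univ i, ?_⟩
          by_cases h1 : i = j
          · subst h1
            exact ne_of_gt hjlt
          by_cases h2 : i = k
          · subst h2
            exact ne_of_lt hklt
          · rwa [← hx't i h1 h2]
      have := Finset.card_le_card hss
      rw [Finset.card_erase_of_mem hwD] at this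
      omega
    have hcard' : (Finset.univ.filter (fun i => x' i ≠ y i)).card ≤ N := by
      rcases le_total (x j - y j) (y k - x k) with h | h
      · exact hsub j (Or.inl ⟨rfl, by rw [hx'j, hδdef, min_eq_left h]; ring⟩)
      · exact hsub k (Or.inr ⟨rfl, by rw [hx'k, hδdef, min_eq_right h]; ring⟩)
    exact le_trans hstep (ih x' hx'0 hpfxx' hsum' hcard')

lemma decRearrange_eq_comp {n : ℕ} (x : Fin n → ℝ) :
    decRearrange x = x ∘ (Fin.revPerm.trans (Tuple.sort x)) := rfl

lemma EC_decRearrange {n : ℕ} (x : Fin n → ℝ) : EC (decRearrange x) = EC x := by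
  rw [decRearrange_eq_comp, EC_comp_equiv]

lemma sum_decRearrange {n : ℕ} (x : Fin n → ℝ) : ∑ i, decRearrange x i = ∑ i, x i := by
  rw [decRearrange_eq_comp]
  exact Equiv.sum_comp _ x

lemma antitone_decRearrange {n : ℕ} (x : Fin n → ℝ) : Antitone (decRearrange x) := by
  intro a b hab
  have h := Tuple.monotone_sort x (Fin.rev_le_rev.2 hab)
  exact h

/-- `E_C` is Schur concave on the probability simplex. -/
theorem EC_schur_concave (n : ℕ) (p q : Fin n → ℝ)
    (hp : p ∈ probSimplex n) (hq : q ∈ probSimplex n) (hmaj : Majorizes q p) :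
    EC p ≥ EC q := by
  have hkey : EC (decRearrange q) ≤ EC (decRearrange p) := by
    apply EC_main (decRearrange p)
      (fun i => hp.1 _) (antitone_decRearrange p) n (decRearrange q)
      (fun i => hq.1 _) (fun k => hmaj.1 k)
    · rw [sum_decRearrange, sum_decRearrange, hq.2, hp.2]
    · exact (Finset.card_filter_le _ _).trans (by simp)
  rwa [EC_decRearrange, EC_decRearrange] at hkey
end

section
/- View E_C as the polynomial function on ℝ^n given by E_C(p) := ∑_{∅ ≠ S ⊆ {1,…,n}} (|S|−1)! ∏_{j∈S} p_j. Then for all p ∈ ℝ^n and all distinct indices i, j ∈ {1,…,n}, the difference of partial derivatives satisfies ∂_{p_i}E_C(p) − ∂_{p_j}E_C(p) = (p_j − p_i) · ∑_{S* ⊆ {1,…,n}∖{i,j}} (|S*|+1)! ∏_{l∈S*} p_l, where the sum runs over all subsets S* (including the empty set, whose product is 1). -/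
open Real MeasureTheory Finset

lemma EC_hasFDerivAt {n : ℕ} (p : Fin n → ℝ) :
    HasFDerivAt EC
      (∑ S ∈ (Finset.univ : Finset (Fin n)).powerset.filter (fun S => S.Nonempty),
        (((S.card - 1).factorial : ℝ)) •
          ∑ k ∈ S, (∏ l ∈ S.erase k, p l) • (ContinuousLinearMap.proj k :
            (Fin n → ℝ) →L[ℝ] ℝ)) p := by
  unfold EC
  apply HasFDerivAt.fun_sum
  intro S _
  exact (hasFDerivAt_finset_prod).const_mul _

lemma EC_fderiv_single {n : ℕ} (p : Fin n → ℝ) (i : Fin n) :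
    fderiv ℝ EC p (Pi.single i 1)
      = ∑ T ∈ ((Finset.univ : Finset (Fin n)) \ {i}).powerset,
          (T.card.factorial : ℝ) * ∏ l ∈ T, p l := by
  rw [(EC_hasFDerivAt p).fderiv]
  simp only [ContinuousLinearMap.coe_sum', Finset.sum_apply, ContinuousLinearMap.coe_smul',
    Pi.smul_apply, ContinuousLinearMap.proj_apply, smul_eq_mul, Pi.single_apply]
  simp only [mul_ite, mul_one, mul_zero, Finset.sum_ite_eq', smul_eq_mul]
  rw [← Finset.sum_filter]
  have hset : (((Finset.univ : Finset (Fin n)).powerset.filter (fun S => S.Nonempty)).filter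
      (fun S => i ∈ S)) = (Finset.univ : Finset (Fin n)).powerset.filter (fun S => i ∈ S) := by
    ext S
    simp only [Finset.mem_filter, Finset.mem_powerset, and_assoc]
    constructor
    · rintro ⟨h1, _, h3⟩; exact ⟨h1, h3⟩
    · rintro ⟨h1, h3⟩; exact ⟨h1, ⟨i, h3⟩, h3⟩
  rw [hset]
  refine Finset.sum_nbij' (fun S => S.erase i) (fun T => insert i T) ?_ ?_ ?_ ?_ ?_
  · intro S hS
    simp only [Finset.mem_filter, Finset.mem_powerset] at hS
    simp only [Finset.mem_powerset]
    intro x hx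
    simp only [Finset.mem_erase] at hx
    simp [hx.1]
  · intro T hT
    simp only [Finset.mem_powerset, Finset.subset_sdiff, Finset.disjoint_singleton_right] at hT
    simp [Finset.mem_filter, hT.2]
  · intro S hS
    simp only [Finset.mem_filter] at hS
    exact Finset.insert_erase hS.2
  · intro T hT
    simp only [Finset.mem_powerset, Finset.subset_sdiff, Finset.disjoint_singleton_right] at hT
    exact Finset.erase_insert hT.2
  · intro S hS
    simp only [Finset.mem_filter] at hS
    rw [Finset.card_erase_of_mem hS.2]


/-- The difference of partial derivatives of `E_C`. -/
theorem EC_partial_derivative_difference (n : ℕ) (p : Fin n → ℝ) (i j : Fin n) (hij : i ≠ j) :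
    fderiv ℝ EC p (Pi.single i 1) - fderiv ℝ EC p (Pi.single j 1)
      = (p j - p i) *
        ∑ S ∈ ((Finset.univ : Finset (Fin n)) \ {i, j}).powerset,
          (S.card + 1).factorial * ∏ l ∈ S, p l := by
  --
  rw [EC_fderiv_single, EC_fderiv_single]
  set A : Finset (Fin n) := (Finset.univ : Finset (Fin n)) \ {i, j} with hA
  have hjA : j ∉ A := by simp [hA]
  have hiA : i ∉ A := by simp [hA]
  have h1 : (Finset.univ : Finset (Fin n)) \ {i} = insert j A := by
    ext x
    simp only [hA, Finset.mem_sdiff, Finset.mem_insert, Finset.mem_singleton, Finset.mem_univ,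
      true_and]
    have hji := hij.symm
    by_cases hxj : x = j <;> by_cases hxi : x = i <;> simp_all
  have h2 : (Finset.univ : Finset (Fin n)) \ {j} = insert i A := by
    ext x
    simp only [hA, Finset.mem_sdiff, Finset.mem_insert, Finset.mem_singleton, Finset.mem_univ,
      true_and]
    have hji := hij.symm
    by_cases hxj : x = j <;> by_cases hxi : x = i <;> simp_all
  rw [h1, h2, Finset.sum_powerset_insert hjA, Finset.sum_powerset_insert hiA]
  have key : ∀ (a : Fin n), a ∉ A → ∀ S ∈ A.powerset,
      ((insert a S).card.factorial : ℝ) * ∏ l ∈ insert a S, p l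
        = (S.card + 1).factorial * (p a * ∏ l ∈ S, p l) := by
    intro a ha S hS
    rw [Finset.mem_powerset] at hS
    have haS : a ∉ S := fun h => ha (hS h)
    rw [Finset.card_insert_of_notMem haS, Finset.prod_insert haS]
  rw [Finset.sum_congr rfl (key j hjA), Finset.sum_congr rfl (key i hiA), Finset.mul_sum]
  rw [add_sub_add_left_eq_sub, ← Finset.sum_sub_distrib]
  apply Finset.sum_congr rfl
  intro S _
  ring
end

section
/- For all integers m ≥ 1 and 1 ≤ k ≤ m, c_{k,m} ≥ (k+1)·exp(−k²/m). -/
open Real MeasureTheory Finset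

lemma binom_aux (p : ℕ) (x : ℝ) (hx : 0 ≤ x) :
    x ^ (p + 1) + (p + 1) * x ^ p ≤ (x + 1) ^ (p + 1) := by
  rw [add_pow]
  have hsub : ({p, p + 1} : Finset ℕ) ⊆ range (p + 2) := by
    intro i hi
    simp only [Finset.mem_insert, Finset.mem_singleton] at hi
    rcases hi with h | h <;> simp [h] <;> omega
  calc x ^ (p+1) + (p+1) * x ^ p
      = ∑ i ∈ ({p, p+1} : Finset ℕ), x ^ i * 1 ^ (p+1-i) * ((p+1).choose i) := by
        rw [Finset.sum_pair (by omega)]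
        simp [Nat.choose_succ_self_right]
        ring
    _ ≤ ∑ i ∈ range (p+2), x ^ i * 1 ^ (p+1-i) * ((p+1).choose i) :=
        Finset.sum_le_sum_of_subset_of_nonneg hsub (fun i _ _ => by positivity)

lemma faulhaber (p : ℕ) : ∀ k : ℕ, (∑ i ∈ range k, (i:ℝ) ^ p) * (p + 1) ≤ (k:ℝ) ^ (p+1) := by
  intro k
  induction k with
  | zero => simp
  | succ k ih =>
    have hb := binom_aux p (k:ℝ) (by positivity)
    rw [Finset.sum_range_succ, add_mul]
    push_cast
    nlinarith

lemma hasSum_telescope' : HasSum (fun n : ℕ => 1/((n:ℝ)+1) - 1/((n:ℝ)+2)) 1 := by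
  have hnn : ∀ n : ℕ, 0 ≤ 1/((n:ℝ)+1) - 1/((n:ℝ)+2) := by
    intro n
    have : 1/((n:ℝ)+2) ≤ 1/((n:ℝ)+1) := by
      apply one_div_le_one_div_of_le
      · positivity
      · linarith
    linarith
  rw [hasSum_iff_tendsto_nat_of_nonneg hnn]
  have heq : ∀ n : ℕ, ∑ i ∈ range n, (1/((i:ℝ)+1) - 1/((i:ℝ)+2)) = 1 - 1/((n:ℝ)+1) := by
    intro n
    have h := Finset.sum_range_sub' (fun i : ℕ => 1/((i:ℝ)+1)) n
    have h2 : ∑ i ∈ range n, (1/((i:ℝ)+1) - 1/((i:ℝ)+2)) = ∑ i ∈ range n, (1/((i:ℝ)+1) - 1/(((i+1:ℕ):ℝ)+1)) := by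
      apply Finset.sum_congr rfl
      intro i _
      push_cast
      ring_nf
    rw [h2, h]
    norm_num
  simp only [heq]
  have := tendsto_one_div_add_atTop_nhds_zero_nat (𝕜 := ℝ)
  have h2 : Filter.Tendsto (fun n : ℕ => 1 - 1/((n:ℝ)+1)) Filter.atTop (nhds (1 - 0)) :=
    Filter.Tendsto.sub tendsto_const_nhds this
  simpa using h2

lemma log_sum_bound (m k : ℕ) (hm : 1 ≤ m) (hkm : k ≤ m) :
    ∑ i ∈ range k, (-Real.log (1 - (i:ℝ)/m)) ≤ (k:ℝ)^2 / m := by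
  have hm0 : (0:ℝ) < m := by exact_mod_cast hm
  set F : ℕ → ℕ → ℝ := fun i n => ((i:ℝ)/m)^(n+1)/(n+1) with hF
  have hlt : ∀ i ∈ range k, |(i:ℝ)/m| < 1 := by
    intro i hi
    rw [Finset.mem_range] at hi
    rw [abs_of_nonneg (by positivity)]
    rw [div_lt_one hm0]
    exact_mod_cast lt_of_lt_of_le hi hkm
  have hS : ∀ i ∈ range k, HasSum (F i) (-Real.log (1 - (i:ℝ)/m)) := by
    intro i hi
    exact Real.hasSum_pow_div_log_of_abs_lt_one (hlt i hi)
  set G : ℕ → ℝ := fun n => ∑ i ∈ range k, F i n with hG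
  set H : ℕ → ℝ := fun n => ((k:ℝ)^2/m) * (1/((n:ℝ)+1) - 1/((n:ℝ)+2)) with hH
  have hHsum : HasSum H ((k:ℝ)^2/m) := by
    have h := hasSum_telescope'.mul_left ((k:ℝ)^2/m)
    rw [mul_one] at h
    exact h
  have hGH : ∀ n, G n ≤ H n := by
    intro n
    have h1 : G n = (∑ i ∈ range k, (i:ℝ)^(n+1)) / (((n:ℝ)+1) * (m:ℝ)^(n+1)) := by
      rw [hG, Finset.sum_div]
      apply Finset.sum_congr rfl
      intro i _
      simp only [hF, div_pow, div_div]
      rw [mul_comm ((m:ℝ)^(n+1)) ((n:ℝ)+1)]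
    have h2 : (∑ i ∈ range k, (i:ℝ)^(n+1)) ≤ (k:ℝ)^(n+2) / ((n:ℝ)+2) := by
      have := faulhaber (n+1) k
      rw [le_div_iff₀ (by positivity)]
      push_cast at this ⊢
      linarith
    have h3 : (k:ℝ)^(n+2) ≤ (k:ℝ)^2 * (m:ℝ)^n := by
      have : (k:ℝ)^n ≤ (m:ℝ)^n := by
        apply pow_le_pow_left₀ (by positivity)
        exact_mod_cast hkm
      calc (k:ℝ)^(n+2) = (k:ℝ)^2 * (k:ℝ)^n := by ring
        _ ≤ (k:ℝ)^2 * (m:ℝ)^n := by nlinarith [sq_nonneg (k:ℝ)]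
    have h4 : H n = (k:ℝ)^2 * (m:ℝ)^n / (((n:ℝ)+1) * ((n:ℝ)+2) * (m:ℝ)^(n+1)) := by
      rw [hH]
      have hmn : (0:ℝ) < (m:ℝ)^n := by positivity
      field_simp
      ring
    rw [h1, h4]
    have hd1 : (0:ℝ) < ((n:ℝ)+1) * (m:ℝ)^(n+1) := by positivity
    rw [div_le_div_iff₀ hd1 (by positivity)]
    have h5 : (∑ i ∈ range k, (i:ℝ)^(n+1)) * (((n:ℝ)+2)) ≤ (k:ℝ)^(n+2) := by
      have := faulhaber (n+1) k
      push_cast at this ⊢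
      linarith
    have hnn : (0:ℝ) ≤ ∑ i ∈ range k, (i:ℝ)^(n+1) := by positivity
    calc (∑ i ∈ range k, (i:ℝ)^(n+1)) * (((n:ℝ)+1) * ((n:ℝ)+2) * (m:ℝ)^(n+1))
        = ((∑ i ∈ range k, (i:ℝ)^(n+1)) * ((n:ℝ)+2)) * (((n:ℝ)+1) * (m:ℝ)^(n+1)) := by ring
      _ ≤ (k:ℝ)^(n+2) * (((n:ℝ)+1) * (m:ℝ)^(n+1)) := by
          apply mul_le_mul_of_nonneg_right h5 (le_of_lt hd1)
      _ ≤ ((k:ℝ)^2 * (m:ℝ)^n) * (((n:ℝ)+1) * (m:ℝ)^(n+1)) := by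
          apply mul_le_mul_of_nonneg_right h3 (le_of_lt hd1)
  have hGsummable : Summable G := by
    apply summable_sum
    intro i hi
    exact (hS i hi).summable
  have hstep : ∑ i ∈ range k, (-Real.log (1 - (i:ℝ)/m)) = ∑' n, G n :=
    calc ∑ i ∈ range k, (-Real.log (1 - (i:ℝ)/m))
        = ∑ i ∈ range k, ∑' n, F i n :=
          Finset.sum_congr rfl (fun i hi => ((hS i hi).tsum_eq).symm)
      _ = ∑' n, G n := (Summable.tsum_finsetSum (fun i hi => (hS i hi).summable)).symm
  rw [hstep]
  calc ∑' n, G n ≤ ∑' n, H n := Summable.tsum_le_tsum hGH hGsummable hHsum.summable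
    _ = (k:ℝ)^2/m := hHsum.tsum_eq

lemma exp_le_prod (m k : ℕ) (hm : 1 ≤ m) (hkm : k ≤ m) :
    Real.exp (-(k:ℝ)^2 / m) ≤ ∏ i ∈ range k, (1 - (i:ℝ)/m) := by
  have hm0 : (0:ℝ) < m := by exact_mod_cast hm
  have hpos : ∀ i ∈ range k, 0 < 1 - (i:ℝ)/m := by
    intro i hi
    rw [Finset.mem_range] at hi
    have : (i:ℝ) < m := by exact_mod_cast lt_of_lt_of_le hi hkm
    have : (i:ℝ)/m < 1 := (div_lt_one hm0).2 this
    linarith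
  have hprod : 0 < ∏ i ∈ range k, (1 - (i:ℝ)/m) := Finset.prod_pos hpos
  rw [← Real.exp_log hprod, Real.exp_le_exp,
    Real.log_prod (fun i hi => (hpos i hi).ne')]
  have h := log_sum_bound m k hm hkm
  rw [Finset.sum_neg_distrib] at h
  rw [neg_div]
  linarith


/-- Lower bound on the coefficients `c_{k,m}`. -/
theorem ckm_lower_bound (m k : ℕ) (hm : 1 ≤ m) (hk : 1 ≤ k) (hkm : k ≤ m) :
    ckm m k ≥ ((k : ℝ) + 1) * Real.exp (-(k : ℝ) ^ 2 / (m : ℝ)) := by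
  have hm0 : (0:ℝ) < m := by exact_mod_cast hm
  have hrepr : ckm m k = ((k:ℝ) + 1) * ∏ i ∈ range k, (1 - (i:ℝ)/m) := by
    have hd : (m.descFactorial k : ℝ) = ∏ i ∈ range k, ((m:ℝ) - i) := by
      rw [Nat.descFactorial_eq_prod_range, Nat.cast_prod]
      apply Finset.prod_congr rfl
      intro i hi
      rw [Finset.mem_range] at hi
      have : i ≤ m := le_trans (le_of_lt hi) hkm
      push_cast [Nat.cast_sub this]
      ring
    have hchoose : ((m.choose k : ℝ)) * (k.factorial : ℝ) = ∏ i ∈ range k, ((m:ℝ) - i) := by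
      rw [← hd, ← Nat.cast_mul, mul_comm (m.choose k) _, ← Nat.descFactorial_eq_factorial_mul_choose]
    have hfact : ((k+1).factorial : ℝ) = ((k:ℝ)+1) * (k.factorial : ℝ) := by
      rw [Nat.factorial_succ]
      push_cast
      ring
    have hprod : ∏ i ∈ range k, (1 - (i:ℝ)/m) = (∏ i ∈ range k, ((m:ℝ) - i)) / (m:ℝ)^k := by
      have : (m:ℝ)^k = ∏ _i ∈ range k, (m:ℝ) := by
        rw [Finset.prod_const, Finset.card_range]
      rw [this, ← Finset.prod_div_distrib]
      apply Finset.prod_congr rfl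
      intro i _
      field_simp
    unfold ckm
    rw [hfact, hprod, ← hchoose]
    field_simp
  rw [hrepr, ge_iff_le]
  have hk1 : (0:ℝ) ≤ (k:ℝ) + 1 := by positivity
  exact mul_le_mul_of_nonneg_left (exp_le_prod m k hm hkm) hk1
end

section
/- For every integer m ≥ 1 and every s ∈ (0,1), ∑_{k=1}^m c_{k,m}·(1−s)^k ≥ ∫_0^{m+1} u·exp(−u²/m + u·ln(1−s)) du − 1. -/
open Real MeasureTheory Finset

/-- Key elementary inequality: `(a-1) * (log (a/m) - log ((a-1)/m)) ≤ 1`. -/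
private lemma log_ratio_le (a m : ℝ) (ha : 1 ≤ a) (hm : 0 < m) :
    (a - 1) * (Real.log (a / m) - Real.log ((a - 1) / m)) ≤ 1 := by
  rcases eq_or_lt_of_le ha with h | h
  · simp [← h]
  · have ha1 : 0 < a - 1 := by linarith
    have ha0 : 0 < a := by linarith
    have h1 : Real.log (a / m) - Real.log ((a - 1) / m) = Real.log (a / (a - 1)) := by
      rw [Real.log_div (by positivity) (by positivity),
        Real.log_div (by positivity) (by positivity),
        Real.log_div (by positivity) (by positivity)]
      ring
    rw [h1]
    have h2 : Real.log (a / (a - 1)) ≤ a / (a - 1) - 1 :=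
      Real.log_le_sub_one_of_pos (by positivity)
    have h3 : (a - 1) * (a / (a - 1) - 1) = 1 := by field_simp; ring
    calc (a - 1) * Real.log (a / (a - 1)) ≤ (a - 1) * (a / (a - 1) - 1) :=
          mul_le_mul_of_nonneg_left h2 ha1.le
      _ = 1 := h3

/-- Lower bound on the partial sums of logarithms. -/
private lemma sum_log_ge (m : ℕ) (hm : 1 ≤ m) :
    ∀ k : ℕ, k ≤ m →
      -(k : ℝ) - ((m : ℝ) - k) * Real.log (((m : ℝ) - k) / m) ≤
        ∑ j ∈ Finset.range k, Real.log (1 - (j : ℝ) / m) := by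
  have hmpos : (0 : ℝ) < m := by exact_mod_cast hm
  intro k
  induction k with
  | zero => intro _; simp [div_self hmpos.ne']
  | succ k ih =>
    intro hk
    have hkm : k < m := hk
    have ih' := ih hkm.le
    rw [Finset.sum_range_succ]
    have hk1 : (k : ℝ) + 1 ≤ (m : ℝ) := by exact_mod_cast hk
    have ha1 : 1 ≤ (m : ℝ) - k := by linarith
    have h1 : 1 - (k : ℝ) / m = ((m : ℝ) - k) / m := by field_simp
    have key := log_ratio_le ((m : ℝ) - k) m ha1 hmpos
    have hcast : ((m : ℝ) - ((k : ℕ) + 1 : ℕ)) = ((m : ℝ) - k) - 1 := by push_cast; ring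
    rw [hcast, h1]
    push_cast
    nlinarith [ih', key]

/-- The product of logs is at least `-k²/m`. -/
private lemma sum_log_ge_sq (m : ℕ) (hm : 1 ≤ m) (k : ℕ) (hk : k ≤ m) :
    -(k : ℝ) ^ 2 / m ≤ ∑ j ∈ Finset.range k, Real.log (1 - (j : ℝ) / m) := by
  have hmpos : (0 : ℝ) < m := by exact_mod_cast hm
  refine le_trans ?_ (sum_log_ge m hm k hk)
  rcases eq_or_lt_of_le hk with h | h
  · subst h
    simp only [sub_self, zero_div, Real.log_zero, mul_zero]
    have hmm : (k : ℝ) ^ 2 / k = k := by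
      rw [sq, mul_div_assoc, div_self hmpos.ne', mul_one]
    rw [neg_div, hmm]
    linarith
  · have hkm : (k : ℝ) < m := by exact_mod_cast h
    have hpos : (0 : ℝ) < ((m : ℝ) - k) / m := div_pos (by linarith) hmpos
    have h2 : Real.log (((m : ℝ) - k) / m) ≤ ((m : ℝ) - k) / m - 1 :=
      Real.log_le_sub_one_of_pos hpos
    have h3 : ((m : ℝ) - k) / m - 1 = -(k : ℝ) / m := by field_simp; ring
    rw [h3] at h2
    have h4 : ((m : ℝ) - k) * Real.log (((m : ℝ) - k) / m) ≤ ((m : ℝ) - k) * (-(k : ℝ) / m) :=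
      mul_le_mul_of_nonneg_left h2 (by linarith)
    calc -(k : ℝ) ^ 2 / m = -(k : ℝ) - ((m : ℝ) - k) * (-(k : ℝ) / m) := by
          field_simp; ring
      _ ≤ -(k : ℝ) - ((m : ℝ) - k) * Real.log (((m : ℝ) - k) / m) :=
          sub_le_sub_left h4 _

/-- Product formula for `ckm`. -/
private lemma ckm_eq_prod (m k : ℕ) (hm : 1 ≤ m) (hk : k ≤ m) :
    ckm m k = ((k : ℝ) + 1) * ∏ j ∈ Finset.range k, (1 - (j : ℝ) / m) := by
  have hmpos : (0 : ℝ) < m := by exact_mod_cast hm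
  have h2 : ((m.descFactorial k : ℕ) : ℝ) = ∏ j ∈ Finset.range k, ((m : ℝ) - j) := by
    rw [Nat.descFactorial_eq_prod_range, Nat.cast_prod]
    refine Finset.prod_congr rfl fun j hj => ?_
    have : j ≤ m := le_of_lt (lt_of_lt_of_le (Finset.mem_range.mp hj) hk)
    rw [Nat.cast_sub this]
  have h1 : ∏ j ∈ Finset.range k, (1 - (j : ℝ) / m)
      = (∏ j ∈ Finset.range k, ((m : ℝ) - j)) / (m : ℝ) ^ k := by
    calc ∏ j ∈ Finset.range k, (1 - (j : ℝ) / m)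
        = ∏ j ∈ Finset.range k, (((m : ℝ) - j) / m) := by
          refine Finset.prod_congr rfl fun j _ => ?_
          field_simp
      _ = (∏ j ∈ Finset.range k, ((m : ℝ) - j)) / ∏ _j ∈ Finset.range k, (m : ℝ) :=
          Finset.prod_div_distrib _ _
      _ = (∏ j ∈ Finset.range k, ((m : ℝ) - j)) / (m : ℝ) ^ k := by
          rw [Finset.prod_const, Finset.card_range]
  have h3 : (m.choose k : ℝ) * ((k + 1).factorial : ℝ)
      = ((k : ℝ) + 1) * (m.descFactorial k : ℝ) := by
    rw [Nat.descFactorial_eq_factorial_mul_choose]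
    push_cast [Nat.factorial_succ]
    ring
  rw [ckm, h1, h3, h2]
  ring

/-- Comparison of the exponential term with `ckm` terms. -/
private lemma term_le (m k : ℕ) (hm : 1 ≤ m) (hk1 : 1 ≤ k) (hk : k ≤ m) (s : ℝ)
    (hs : s ∈ Set.Ioo (0 : ℝ) 1) :
    ((k : ℝ) + 1) * Real.exp (-(k : ℝ) ^ 2 / m + (k : ℝ) * Real.log (1 - s))
      ≤ ckm m k * (1 - s) ^ k := by
  have hmpos : (0 : ℝ) < m := by exact_mod_cast hm
  have hs1 : (0 : ℝ) < 1 - s := by linarith [hs.2]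
  have hexp : Real.exp ((k : ℝ) * Real.log (1 - s)) = (1 - s) ^ k := by
    rw [Real.exp_nat_mul, Real.exp_log hs1]
  rw [Real.exp_add, hexp, ckm_eq_prod m k hm hk, mul_assoc ((k : ℝ) + 1)]
  refine mul_le_mul_of_nonneg_left ?_ (by positivity)
  refine mul_le_mul_of_nonneg_right ?_ (by positivity)
  have hprod : ∏ j ∈ Finset.range k, (1 - (j : ℝ) / m)
      = Real.exp (∑ j ∈ Finset.range k, Real.log (1 - (j : ℝ) / m)) := by
    rw [Real.exp_sum]
    refine Finset.prod_congr rfl fun j hj => ?_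
    have hj' : j < m := lt_of_lt_of_le (Finset.mem_range.mp hj) hk
    have : (j : ℝ) / m < 1 := by
      rw [div_lt_one hmpos]; exact_mod_cast hj'
    rw [Real.exp_log (by linarith)]
  rw [hprod]
  exact Real.exp_le_exp.mpr (sum_log_ge_sq m hm k hk)

/-- Integral lower bound on the sum `∑_{k=1}^m c_{k,m} (1-s)^k`. -/
theorem sum_ckm_ge_integral (m : ℕ) (hm : 1 ≤ m) (s : ℝ) (hs : s ∈ Set.Ioo (0:ℝ) 1) :
    ∑ k ∈ Finset.Icc 1 m, ckm m k * (1 - s) ^ k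
      ≥ (∫ u in (0:ℝ)..((m : ℝ) + 1),
          u * Real.exp (-u ^ 2 / (m : ℝ) + u * Real.log (1 - s))) - 1 := by
  have hmpos : (0 : ℝ) < m := by exact_mod_cast hm
  have hs1 : (0 : ℝ) < 1 - s := by linarith [hs.2]
  set L : ℝ := Real.log (1 - s) with hL
  have hLneg : L < 0 := Real.log_neg hs1 (by linarith [hs.1])
  set f : ℝ → ℝ := fun u => u * Real.exp (-u ^ 2 / (m : ℝ) + u * L) with hf
  have hfc : Continuous f := by
    apply Continuous.mul continuous_id
    exact Real.continuous_exp.comp (by continuity)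
  set g : ℕ → ℝ := fun k => ((k : ℝ) + 1) * Real.exp (-(k : ℝ) ^ 2 / m + (k : ℝ) * L) with hg
  -- split the integral
  have hsplit : ∑ k ∈ Finset.range (m + 1), ∫ u in ((k : ℕ) : ℝ)..(((k + 1 : ℕ) : ℕ) : ℝ), f u
      = ∫ u in ((0 : ℕ) : ℝ)..(((m + 1 : ℕ) : ℕ) : ℝ), f u := by
    exact intervalIntegral.sum_integral_adjacent_intervals
      (fun k _ => hfc.intervalIntegrable _ _)
  -- bound each piece
  have hpiece : ∀ k : ℕ, k ≤ m →
      (∫ u in ((k : ℕ) : ℝ)..(((k + 1 : ℕ) : ℕ) : ℝ), f u) ≤ g k := by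
    intro k hk
    have hcast : (((k + 1 : ℕ) : ℕ) : ℝ) = (k : ℝ) + 1 := by push_cast; ring
    rw [hcast]
    have hconst : (∫ _u in ((k : ℕ) : ℝ)..((k : ℝ) + 1), g k) = g k := by
      rw [intervalIntegral.integral_const]; simp
    rw [← hconst]
    refine intervalIntegral.integral_mono_on (by linarith) (hfc.intervalIntegrable _ _)
      (intervalIntegrable_const) ?_
    intro u hu
    obtain ⟨hu1, hu2⟩ := hu
    have hk0 : (0 : ℝ) ≤ (k : ℝ) := by positivity
    have hu0 : (0 : ℝ) ≤ u := le_trans hk0 hu1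
    have harg : -u ^ 2 / (m : ℝ) + u * L ≤ -(k : ℝ) ^ 2 / m + (k : ℝ) * L := by
      have h1 : (k : ℝ) ^ 2 ≤ u ^ 2 := by nlinarith
      have h2 : -u ^ 2 / (m : ℝ) ≤ -(k : ℝ) ^ 2 / m :=
        (div_le_div_iff_of_pos_right hmpos).mpr (by linarith)
      have h3 : u * L ≤ (k : ℝ) * L := by nlinarith
      linarith
    show u * Real.exp (-u ^ 2 / (m : ℝ) + u * L) ≤ ((k : ℝ) + 1) * Real.exp _
    refine mul_le_mul hu2 (Real.exp_le_exp.mpr harg) (Real.exp_pos _).le (by positivity)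
  have hsum : (∫ u in ((0 : ℕ) : ℝ)..(((m + 1 : ℕ) : ℕ) : ℝ), f u)
      ≤ ∑ k ∈ Finset.range (m + 1), g k := by
    rw [← hsplit]
    exact Finset.sum_le_sum fun k hk => hpiece k (Nat.lt_succ_iff.mp (Finset.mem_range.mp hk))
  have hg0 : g 0 = 1 := by simp [hg]
  have hsum2 : ∑ k ∈ Finset.range (m + 1), g k = 1 + ∑ k ∈ Finset.range m, g (k + 1) := by
    rw [Finset.sum_range_succ' g m, hg0]; ring
  have hicc : ∑ k ∈ Finset.Icc 1 m, ckm m k * (1 - s) ^ k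
      = ∑ k ∈ Finset.range m, ckm m (k + 1) * (1 - s) ^ (k + 1) := by
    rw [← Finset.Ico_add_one_right_eq_Icc, Finset.sum_Ico_eq_sum_range]
    simp [add_comm]
  have hterm : ∀ k ∈ Finset.range m, g (k + 1) ≤ ckm m (k + 1) * (1 - s) ^ (k + 1) := by
    intro k hk
    have hk' : k + 1 ≤ m := Finset.mem_range.mp hk
    have := term_le m (k + 1) hm (Nat.le_add_left 1 k) hk' s hs
    simpa [hg] using this
  have hfinal : ∑ k ∈ Finset.range m, g (k + 1)
      ≤ ∑ k ∈ Finset.Icc 1 m, ckm m k * (1 - s) ^ k := by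
    rw [hicc]
    exact Finset.sum_le_sum hterm
  have hcast0 : ((0 : ℕ) : ℝ) = (0 : ℝ) := by norm_num
  have hcastm : (((m + 1 : ℕ) : ℕ) : ℝ) = (m : ℝ) + 1 := by push_cast; ring
  rw [ge_iff_le]
  calc (∫ u in (0:ℝ)..((m : ℝ) + 1), u * Real.exp (-u ^ 2 / (m : ℝ) + u * Real.log (1 - s))) - 1
      = (∫ u in ((0 : ℕ) : ℝ)..(((m + 1 : ℕ) : ℕ) : ℝ), f u) - 1 := by
        rw [hcast0, hcastm]
    _ ≤ (∑ k ∈ Finset.range (m + 1), g k) - 1 := by linarith [hsum]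
    _ = ∑ k ∈ Finset.range m, g (k + 1) := by rw [hsum2]; ring
    _ ≤ ∑ k ∈ Finset.Icc 1 m, ckm m k * (1 - s) ^ k := hfinal
end

section
/- Let n ≥ 2 and let g : ℝ^n → ℝ be a symmetric (permutation-invariant) function that is continuously differentiable on a neighborhood of the positive simplex 𝒫ₙ⁺ and Schur concave on 𝒫ₙ. Suppose κ > 0 is such that |g(p) − g(q)| ≤ κ·TV(p,q) for all p, q ∈ 𝒫ₙ. Then for every r ∈ 𝒫ₙ⁺ and all indices i, j with r_i = max_l r_l and r_j = min_l r_l, one has ∂_{r_i}g(r) − ∂_{r_j}g(r) ≤ κ. -/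
open Real MeasureTheory Finset

/-- Conversely, any Lipschitz constant `κ` for a symmetric Schur-concave function bounds
the extremal partial-derivative difference on the positive simplex. -/
theorem gradient_bound_of_schur_concave_lipschitz (n : ℕ) (hn : 2 ≤ n)
    (g : (Fin n → ℝ) → ℝ)
    (hsymm : ∀ (σ : Equiv.Perm (Fin n)) (p : Fin n → ℝ), g (p ∘ σ) = g p)
    (hdiff : ∃ U : Set (Fin n → ℝ), IsOpen U ∧ probSimplexPos n ⊆ U ∧ ContDiffOn ℝ 1 g U)
    (hschur : ∀ p q : Fin n → ℝ, p ∈ probSimplex n → q ∈ probSimplex n →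
      Majorizes q p → g q ≤ g p)
    (κ : ℝ) (hκ : 0 < κ)
    (hLip : ∀ p q : Fin n → ℝ, p ∈ probSimplex n → q ∈ probSimplex n →
      |g p - g q| ≤ κ * TV p q) :
    ∀ r : Fin n → ℝ, r ∈ probSimplexPos n → ∀ i j : Fin n,
      (∀ l, r l ≤ r i) → (∀ l, r j ≤ r l) →
      fderiv ℝ g r (Pi.single i 1) - fderiv ℝ g r (Pi.single j 1) ≤ κ := by
  intro r hr i j hi hj
  by_cases hij : i = j
  · subst hij; simpa using hκ.le
  obtain ⟨U, hUopen, hUsub, hUdiff⟩ := hdiff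
  have hrU : r ∈ U := hUsub hr
  have hdiffAt : DifferentiableAt ℝ g r :=
    (hUdiff.contDiffAt (hUopen.mem_nhds hrU)).differentiableAt one_ne_zero
  set v : Fin n → ℝ := Pi.single i 1 - Pi.single j 1 with hv
  have hlin : fderiv ℝ g r (Pi.single i 1) - fderiv ℝ g r (Pi.single j 1)
      = fderiv ℝ g r v := by rw [hv, map_sub]
  rw [hlin]
  have hc : HasDerivAt (fun t : ℝ => r + t • v) v 0 := by
    simpa using ((hasDerivAt_id (0:ℝ)).smul_const v).const_add r
  have hφ : HasDerivAt (fun t : ℝ => g (r + t • v)) (fderiv ℝ g r v) 0 := by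
    have h0 : HasFDerivAt g (fderiv ℝ g r) ((fun t : ℝ => r + t • v) 0) := by
      simpa using hdiffAt.hasFDerivAt
    exact h0.comp_hasDerivAt 0 hc
  have hslope : Filter.Tendsto (slope (fun t : ℝ => g (r + t • v)) 0) (nhdsWithin 0 (Set.Ioi 0))
      (nhds (fderiv ℝ g r v)) := by
    have h := (hφ.hasDerivWithinAt (s := Set.Ioi 0))
    rw [hasDerivWithinAt_iff_tendsto_slope] at h
    simpa [Set.diff_singleton_eq_self (by simp : (0:ℝ) ∉ Set.Ioi 0)] using h
  refine le_of_tendsto hslope ?_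
  have hrj : 0 < r j := hr.1 j
  filter_upwards [Ioo_mem_nhdsGT_of_mem (by exact ⟨le_rfl, hrj⟩ : (0:ℝ) ∈ Set.Ico 0 (r j))]
    with t ht
  obtain ⟨ht0, htj⟩ := ht
  set p : Fin n → ℝ := r + t • v with hp
  have hvabs : ∀ l, |v l| = (if l = i then (1:ℝ) else 0) + (if l = j then (1:ℝ) else 0) := by
    intro l
    have hji : j ≠ i := fun h => hij h.symm
    rcases eq_or_ne l i with h | h <;> rcases eq_or_ne l j with h' | h' <;>
      simp [hv, Pi.sub_apply, Pi.single_apply, h, h', hij, hji]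
  have hvsum : ∑ l, v l = 0 := by
    simp [hv, Finset.sum_sub_distrib, Finset.sum_pi_single]
  have hTV : TV p r = t := by
    have habs : ∀ l, |p l - r l| = t * |v l| := by
      intro l
      simp [hp, abs_mul, abs_of_pos ht0, mul_comm]
    simp only [TV, habs, hvabs]
    rw [← Finset.mul_sum, Finset.sum_add_distrib, Finset.sum_ite_eq' Finset.univ i (fun _ => (1:ℝ)),
      Finset.sum_ite_eq' Finset.univ j (fun _ => (1:ℝ))]
    simp
    ring
  have hpmem : p ∈ probSimplex n := by
    constructor
    · intro l
      rcases eq_or_ne l i with h | h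
      · subst h
        have : p l = r l + t := by simp [hp, hv, Pi.single_apply, hij]
        rw [this]; have := hr.1 l; linarith
      rcases eq_or_ne l j with h' | h'
      · subst h'
        have : p l = r l - t := by simp [hp, hv, Pi.single_apply, h]; ring
        rw [this]; linarith
      · have : p l = r l := by simp [hp, hv, Pi.single_apply, h, h']
        rw [this]; exact (hr.1 l).le
    · have : ∑ l, p l = ∑ l, r l + t * ∑ l, v l := by
        simp [hp, Finset.sum_add_distrib, Finset.mul_sum]
      rw [this, hvsum, hr.2]; ring
  have hrmem : r ∈ probSimplex n := ⟨fun l => (hr.1 l).le, hr.2⟩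
  have hbound : g p - g r ≤ κ * t := by
    calc g p - g r ≤ |g p - g r| := le_abs_self _
    _ ≤ κ * TV p r := hLip p r hpmem hrmem
    _ = κ * t := by rw [hTV]
  have hslope_eq : slope (fun t : ℝ => g (r + t • v)) 0 t = (g p - g r) / t := by
    simp [slope_def_field, hp]
  rw [hslope_eq, div_le_iff₀ ht0]
  linarith
end
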